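/- arXiv:2111.00938 — 7 statements merged into one kernel-verified Lean document; each statement's English description precedes it below -/
import Mathlib

section
/- For an n×n symmetric matrix A, ∑_{i,j} (∂E_k/∂A_{ij}) (A²)_{ij} = n·E_1(A)·E_k(A) − (n−k)·E_{k+1}(A), where (A²)_{ij} = ∑_m A_{im} A_{mj}. -/
/-- `E_k(A) = (n choose k)⁻¹ σ_k(κ(A))`, where `σ_k` of the eigenvalues is read off
from the characteristic polynomial of the matrix `A`; note `E_k = 0` for `k > n`. -/
noncomputable def EMat (n k : ℕ) (A : Fin n → Fin n → ℝ) : ℝ :=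
  ((n.choose k : ℝ))⁻¹ * ((-1 : ℝ) ^ k * (Matrix.of A).charpoly.coeff (n - k))

/-- `Ė_k^{ij} = ∂E_k/∂A_{ij}`. -/
noncomputable def EMatDot (n k : ℕ) (A : Fin n → Fin n → ℝ) (i j : Fin n) : ℝ :=
  fderiv ℝ (EMat n k) A (Pi.single i (Pi.single j 1))

open Polynomial Matrix Finset


/-- elementary symmetric polynomial as sum over subsets -/
noncomputable def sigE (n j : ℕ) (μ : Fin n → ℝ) : ℝ :=
  ∑ S ∈ Finset.powersetCard j (Finset.univ : Finset (Fin n)), ∏ i ∈ S, μ i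

lemma coeff_prod_X_sub_C' {n : ℕ} (μ : Fin n → ℝ) {j : ℕ} (hj : j ≤ n) :
    (∏ i : Fin n, (X - C (μ i))).coeff (n - j) = (-1) ^ j * sigE n j μ := by
  have h1 : (∏ i : Fin n, (X - C (μ i)))
      = (((univ : Finset (Fin n)).val.map μ).map fun t => X - C t).prod := by
    rw [Multiset.map_map]; rfl
  have hcard : Multiset.card ((univ : Finset (Fin n)).val.map μ) = n := by simp
  rw [h1, Multiset.prod_X_sub_C_coeff _ (by rw [hcard]; exact Nat.sub_le n j), hcard,
    Nat.sub_sub_self hj, Finset.esymm_map_val]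
  rfl

lemma charpoly_diagonal' {n : ℕ} (d : Fin n → ℝ) :
    (diagonal d).charpoly = ∏ i : Fin n, (X - C (d i)) := by
  rw [Matrix.charpoly_of_upperTriangular _ (Matrix.blockTriangular_diagonal d)]
  simp

lemma charpoly_unitary_conj {n : ℕ} (U N : Matrix (Fin n) (Fin n) ℝ)
    (h1 : U * star U = 1) :
    (U * N * star U).charpoly = N.charpoly := by
  have hcm : charmatrix (U * N * star U)
      = U.map C * charmatrix N * (star U).map C := by
    have hscal : ∀ M : Matrix (Fin n) (Fin n) ℝ,
        M.map C * Matrix.scalar (Fin n) (X : ℝ[X]) = Matrix.scalar (Fin n) (X : ℝ[X]) * M.map C :=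
      fun M => (Matrix.scalar_commute (X : ℝ[X]) (Commute.all X) (M.map C)).symm
    unfold charmatrix
    simp only [RingHom.mapMatrix_apply]
    have hkey : (Matrix.scalar (Fin n) (X : ℝ[X])) * U.map C * (star U).map C
        = Matrix.scalar (Fin n) (X : ℝ[X]) := by
      rw [Matrix.mul_assoc, ← Matrix.map_mul, h1,
        Matrix.map_one _ (map_zero _) (map_one _), mul_one]
    rw [mul_sub, sub_mul, ← Matrix.map_mul, ← Matrix.map_mul, hscal U, hkey, Matrix.mul_assoc]
  have hdet1 : (U.map (C : ℝ →+* ℝ[X])).det * ((star U).map C).det = 1 := by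
    rw [← det_mul, ← Matrix.map_mul, h1, Matrix.map_one _ (map_zero _) (map_one _), det_one]
  rw [Matrix.charpoly, hcm, det_mul, det_mul, mul_right_comm, hdet1, one_mul]
  rfl


lemma eval_charpoly' {n : ℕ} (M : Matrix (Fin n) (Fin n) ℝ) (r : ℝ) :
    M.charpoly.eval r = (Matrix.scalar (Fin n) r - M).det := by
  rw [Matrix.charpoly, ← Polynomial.coe_evalRingHom, RingHom.map_det]
  congr 1
  ext i j
  by_cases h : i = j <;>
    simp [h, charmatrix_apply, Matrix.scalar_apply, Matrix.diagonal_apply, Matrix.sub_apply]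

lemma diff_coord {n : ℕ} (i j : Fin n) :
    Differentiable ℝ (fun A : Fin n → Fin n → ℝ => A i j) := by
  have : (fun A : Fin n → Fin n → ℝ => A i j)
      = (ContinuousLinearMap.proj (R := ℝ) (φ := fun _ : Fin n => ℝ) j).comp
        (ContinuousLinearMap.proj (R := ℝ) (φ := fun _ : Fin n => Fin n → ℝ) i) := rfl
  rw [this]
  exact ContinuousLinearMap.differentiable _

lemma diff_prod' {E : Type*} [NormedAddCommGroup E] [NormedSpace ℝ E] {ι : Type*} (s : Finset ι)
    (g : ι → E → ℝ) (hg : ∀ i, Differentiable ℝ (g i)) :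
    Differentiable ℝ (fun A => ∏ i ∈ s, g i A) := by
  classical
  induction s using Finset.induction with
  | empty => simp only [Finset.prod_empty]; exact differentiable_const (1 : ℝ)
  | insert _ _ h ih =>
      simp only [Finset.prod_insert h]
      exact (hg _).mul ih

lemma diff_det_affine {n : ℕ} (c : ℝ) :
    Differentiable ℝ (fun A : Fin n → Fin n → ℝ => (Matrix.scalar (Fin n) c - Matrix.of A).det) := by
  have h : (fun A : Fin n → Fin n → ℝ => (Matrix.scalar (Fin n) c - Matrix.of A).det)
      = fun A : Fin n → Fin n → ℝ => ∑ σ : Equiv.Perm (Fin n),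
          ((Equiv.Perm.sign σ : ℤ) : ℝ) *
            ∏ i : Fin n, ((Matrix.scalar (Fin n) c) (σ i) i - A (σ i) i) := by
    funext A
    rw [Matrix.det_apply]
    refine Finset.sum_congr rfl fun σ _ => ?_
    rw [Units.smul_def, zsmul_eq_mul]
    exact congrArg _ (Finset.prod_congr rfl fun i _ => by simp [Matrix.sub_apply])
  rw [h]
  refine Differentiable.fun_sum fun σ _ => Differentiable.const_mul ?_ _
  exact diff_prod' _ _ fun i => (differentiable_const _).sub (diff_coord (σ i) i)


lemma diff_coeff_charpoly {n : ℕ} (m : ℕ) :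
    Differentiable ℝ (fun A : Fin n → Fin n → ℝ => (Matrix.of A).charpoly.coeff m) := by
  have hinj : Set.InjOn (fun t : ℕ => (t : ℝ)) (Finset.range (n + 1)) :=
    fun a _ b _ h => Nat.cast_injective h
  have key : ∀ A : Fin n → Fin n → ℝ, (Matrix.of A).charpoly.coeff m
      = ∑ t ∈ Finset.range (n + 1),
          (Matrix.scalar (Fin n) (t : ℝ) - Matrix.of A).det *
            (Lagrange.basis (Finset.range (n + 1)) (fun t : ℕ => (t : ℝ)) t).coeff m := by
    intro A
    have hdeg : (Matrix.of A).charpoly.degree < (Finset.range (n + 1)).card := by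
      rw [Finset.card_range]
      refine lt_of_le_of_lt Polynomial.degree_le_natDegree ?_
      rw [Matrix.charpoly_natDegree_eq_dim, Fintype.card_fin]
      exact_mod_cast Nat.lt_succ_self n
    have h := Lagrange.eq_interpolate hinj hdeg
    conv_lhs => rw [h]
    rw [Lagrange.interpolate_apply, Polynomial.finset_sum_coeff]
    refine Finset.sum_congr rfl fun t _ => ?_
    rw [Polynomial.coeff_C_mul, eval_charpoly']
  have h2 : (fun A : Fin n → Fin n → ℝ => (Matrix.of A).charpoly.coeff m)
      = fun A => ∑ t ∈ Finset.range (n + 1),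
          (Matrix.scalar (Fin n) (t : ℝ) - Matrix.of A).det *
            (Lagrange.basis (Finset.range (n + 1)) (fun t : ℕ => (t : ℝ)) t).coeff m :=
    funext key
  rw [h2]
  exact Differentiable.fun_sum fun t _ => (diff_det_affine _).mul_const _

lemma diff_EMat {n : ℕ} (k : ℕ) : Differentiable ℝ (EMat n k) := by
  have : EMat n k = fun A => ((n.choose k : ℝ))⁻¹ *
      ((-1 : ℝ) ^ k * (Matrix.of A).charpoly.coeff (n - k)) := rfl
  rw [this]
  exact (((diff_coeff_charpoly (n - k)).const_mul _).const_mul _)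


lemma sigE_one {n : ℕ} (μ : Fin n → ℝ) : sigE n 1 μ = ∑ i : Fin n, μ i := by
  simp [sigE, Finset.powersetCard_one, Finset.sum_map, Function.Embedding.coeFn_mk,
    Finset.prod_singleton]

lemma count_lemma {n k : ℕ} (μ : Fin n → ℝ) :
    ∑ S ∈ powersetCard k (univ : Finset (Fin n)), ∑ i ∈ univ \ S, ∏ j ∈ insert i S, μ j
      = (k + 1 : ℝ) * sigE n (k + 1) μ := by
  classical
  have hrhs : (k + 1 : ℝ) * sigE n (k + 1) μ
      = ∑ T ∈ powersetCard (k + 1) (univ : Finset (Fin n)), ∑ i ∈ T, ∏ j ∈ T, μ j := by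
    rw [sigE, Finset.mul_sum]
    refine Finset.sum_congr rfl fun T hT => ?_
    rw [Finset.sum_const, nsmul_eq_mul, (Finset.mem_powersetCard_univ.mp hT : T.card = k + 1)]
    push_cast; ring
  rw [hrhs, Finset.sum_sigma', Finset.sum_sigma']
  refine Finset.sum_nbij' (fun p => ⟨insert p.2 p.1, p.2⟩) (fun q => ⟨q.1.erase q.2, q.2⟩)
    ?_ ?_ ?_ ?_ ?_
  · rintro ⟨S, i⟩ hp
    rw [Finset.mem_sigma] at hp ⊢
    obtain ⟨hS, hi⟩ := hp
    have hiS : i ∉ S := (Finset.mem_sdiff.mp hi).2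
    refine ⟨Finset.mem_powersetCard_univ.mpr ?_, Finset.mem_insert_self _ _⟩
    rw [Finset.card_insert_of_notMem hiS, Finset.mem_powersetCard_univ.mp hS]
  · rintro ⟨T, i⟩ hq
    rw [Finset.mem_sigma] at hq ⊢
    obtain ⟨hT, hi⟩ := hq
    refine ⟨Finset.mem_powersetCard_univ.mpr ?_, Finset.mem_sdiff.mpr
      ⟨Finset.mem_univ _, Finset.notMem_erase _ _⟩⟩
    rw [Finset.card_erase_of_mem hi, Finset.mem_powersetCard_univ.mp hT]
    omega
  · rintro ⟨S, i⟩ hp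
    rw [Finset.mem_sigma] at hp
    have hiS : i ∉ S := (Finset.mem_sdiff.mp hp.2).2
    simp [Finset.erase_insert hiS]
  · rintro ⟨T, i⟩ hq
    rw [Finset.mem_sigma] at hq
    simp [Finset.insert_erase hq.2]
  · rintro ⟨S, i⟩ hp
    rfl

lemma comb_identity {n : ℕ} (μ : Fin n → ℝ) (k : ℕ) :
    (∑ S ∈ powersetCard k (univ : Finset (Fin n)),
        ∑ i ∈ S, (∏ j ∈ S.erase i, μ j) * μ i ^ 2)
      = sigE n 1 μ * sigE n k μ - (k + 1 : ℝ) * sigE n (k + 1) μ := by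
  classical
  have expand : sigE n 1 μ * sigE n k μ
      = ∑ S ∈ powersetCard k (univ : Finset (Fin n)), ∑ i : Fin n, μ i * ∏ j ∈ S, μ j := by
    rw [sigE_one, sigE, Finset.sum_mul_sum]
    rw [Finset.sum_comm]
  have split : ∀ S ∈ powersetCard k (univ : Finset (Fin n)),
      (∑ i : Fin n, μ i * ∏ j ∈ S, μ j)
        = (∑ i ∈ S, (∏ j ∈ S.erase i, μ j) * μ i ^ 2)
          + ∑ i ∈ univ \ S, ∏ j ∈ insert i S, μ j := by
    intro S hS
    have hsub : S ⊆ univ := Finset.subset_univ S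
    rw [← Finset.sum_sdiff hsub]
    rw [add_comm]
    congr 1
    · refine Finset.sum_congr rfl fun i hi => ?_
      rw [← Finset.mul_prod_erase S μ hi]
      ring
    · refine Finset.sum_congr rfl fun i hi => ?_
      rw [Finset.prod_insert (Finset.mem_sdiff.mp hi).2]
  rw [expand, Finset.sum_congr rfl split, Finset.sum_add_distrib, count_lemma]
  ring



example {n : ℕ} (A : Fin n → Fin n → ℝ) (hA : ∀ i j, A i j = A j i) :
    (Matrix.of A).IsHermitian := by
  ext i j
  simp [Matrix.conjTranspose_apply, hA i j]

lemma key_charpoly {n : ℕ} (A : Fin n → Fin n → ℝ) (hH : (Matrix.of A).IsHermitian) (s : ℝ) :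
    (Matrix.of (fun i j => A i j + s * ∑ m : Fin n, A i m * A m j)).charpoly
      = ∏ i : Fin n, (X - C (hH.eigenvalues i + s * hH.eigenvalues i ^ 2)) := by
  set μ := hH.eigenvalues with hμ
  set U : Matrix (Fin n) (Fin n) ℝ := (hH.eigenvectorUnitary : Matrix (Fin n) (Fin n) ℝ) with hU
  have h1 : U * star U = 1 := mem_unitaryGroup_iff.mp hH.eigenvectorUnitary.2
  have h2 : star U * U = 1 := mem_unitaryGroup_iff'.mp hH.eigenvectorUnitary.2
  have hspec : Matrix.of A = U * diagonal μ * star U := by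
    simpa using hH.spectral_theorem
  have hfun : Matrix.of (fun i j => A i j + s * ∑ m : Fin n, A i m * A m j)
      = Matrix.of A + s • (Matrix.of A * Matrix.of A) := by
    ext i j
    simp [Matrix.mul_apply, Finset.mul_sum]
  have hsq : Matrix.of A * Matrix.of A
      = U * diagonal (fun i => μ i ^ 2) * star U := by
    rw [hspec]
    calc U * diagonal μ * star U * (U * diagonal μ * star U)
        = U * diagonal μ * (star U * U) * diagonal μ * star U := by
          simp only [Matrix.mul_assoc]
      _ = U * (diagonal μ * diagonal μ) * star U := by
          rw [h2]; simp only [Matrix.mul_assoc, Matrix.mul_one, Matrix.one_mul]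
      _ = U * diagonal (fun i => μ i ^ 2) * star U := by
          rw [diagonal_mul_diagonal]; congr 1; ext i; ring_nf
  rw [hfun, hsq, hspec]
  have hcomb : U * diagonal μ * star U
        + s • (U * diagonal (fun i => μ i ^ 2) * star U)
      = U * diagonal (fun i => μ i + s * μ i ^ 2) * star U := by
    rw [← Matrix.smul_mul, ← Matrix.mul_smul, ← Matrix.add_mul, ← Matrix.mul_add,
      ← Matrix.diagonal_smul, ← diagonal_add]
    have hsmul : (s • fun i : Fin n => μ i ^ 2) = fun i => s * μ i ^ 2 := by
      funext i; simp
    rw [hsmul]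
  rw [hcomb, charpoly_unitary_conj U _ h1, charpoly_diagonal']

/-- `∑_{i,j} Ė_k^{ij} (A²)_{ij} = n E_1(A) E_k(A) − (n−k) E_{k+1}(A)`. -/
theorem statement2 (n k : ℕ) (hkn : k ≤ n)
    (A : Fin n → Fin n → ℝ) (hA : ∀ i j, A i j = A j i) :
    ∑ i : Fin n, ∑ j : Fin n, EMatDot n k A i j * (∑ m : Fin n, A i m * A m j)
      = (n : ℝ) * EMat n 1 A * EMat n k A - ((n : ℝ) - (k : ℝ)) * EMat n (k + 1) A := by
  classical
  rcases Nat.eq_zero_or_pos n with hn | hn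
  · subst hn
    have hk0 : k = 0 := Nat.le_zero.mp hkn
    subst hk0
    simp
  have hn' : (n : ℝ) ≠ 0 := Nat.cast_ne_zero.mpr hn.ne'
  have hH : (Matrix.of A).IsHermitian := by
    ext i j
    simp [Matrix.conjTranspose_apply, hA i j]
  set μ : Fin n → ℝ := hH.eigenvalues with hμdef
  set B : Fin n → Fin n → ℝ := fun i j => ∑ m : Fin n, A i m * A m j with hBdef
  set L : (Fin n → Fin n → ℝ) →L[ℝ] ℝ := fderiv ℝ (EMat n k) A with hLdef
  -- Step 1: the LHS is the directional derivative of `EMat n k` in direction `B = A²`.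
  have hBsum : B = ∑ i : Fin n, ∑ j : Fin n, B i j • (Pi.single i (Pi.single j (1:ℝ)) : Fin n → Fin n → ℝ) := by
    funext x y
    simp [Finset.sum_apply, Pi.single_apply, apply_ite (fun f : Fin n → ℝ => f y),
      Finset.sum_ite_eq, Finset.sum_ite_eq']
  have hLHS : ∑ i : Fin n, ∑ j : Fin n, EMatDot n k A i j * (∑ m : Fin n, A i m * A m j)
      = L B := by
    conv_rhs => rw [hBsum]
    rw [map_sum]
    refine Finset.sum_congr rfl fun i _ => ?_
    rw [map_sum]
    refine Finset.sum_congr rfl fun j _ => ?_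
    rw [L.map_smul]
    show EMatDot n k A i j * B i j = _
    simp [EMatDot, smul_eq_mul, mul_comm, hLdef]
  -- Step 2: derivative along the curve s ↦ A + s • B, abstract version.
  have hder1 : HasDerivAt (fun s : ℝ => A + s • B) B 0 := by
    simpa using ((hasDerivAt_id (0:ℝ)).smul_const B).const_add A
  have hcomp : HasDerivAt (fun s : ℝ => EMat n k (A + s • B)) (L B) 0 := by
    have h1 : HasFDerivAt (EMat n k) L (A + (0:ℝ) • B) := by
      have hA0 : A + (0:ℝ) • B = A := by simp
      rw [hA0]
      exact (diff_EMat k A).hasFDerivAt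
    exact h1.comp_hasDerivAt 0 hder1
  -- Step 3: derivative along the curve, explicit version via eigenvalues.
  have hpow : ∀ j : ℕ, (-1:ℝ) ^ j * (-1:ℝ) ^ j = 1 := by
    intro j
    rw [← pow_add, ← two_mul, pow_mul]
    norm_num
  have hg : (fun s : ℝ => EMat n k (A + s • B))
      = fun s => ((n.choose k : ℝ))⁻¹ * sigE n k (fun i => μ i + s * μ i ^ 2) := by
    funext s
    have hfeq : (A + s • B) = (fun i j => A i j + s * ∑ m : Fin n, A i m * A m j) := by
      funext i j
      simp [hBdef]
    rw [hfeq]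
    show ((n.choose k:ℝ))⁻¹ * ((-1:ℝ)^k * (Matrix.of _).charpoly.coeff (n - k)) = _
    rw [key_charpoly A hH s, coeff_prod_X_sub_C' _ hkn, ← mul_assoc ((-1:ℝ)^k), hpow k, one_mul]
  have hT : HasDerivAt (fun s : ℝ => EMat n k (A + s • B))
      (((n.choose k : ℝ))⁻¹ * ∑ S ∈ powersetCard k (univ : Finset (Fin n)),
        ∑ i ∈ S, (∏ j ∈ S.erase i, μ j) * μ i ^ 2) 0 := by
    rw [hg]
    refine HasDerivAt.const_mul _ (HasDerivAt.fun_sum fun S _ => ?_)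
    have hfac : ∀ i ∈ S, HasDerivAt (fun s : ℝ => μ i + s * μ i ^ 2) (μ i ^ 2) 0 :=
      fun i _ => (hasDerivAt_mul_const (μ i ^ 2)).const_add (μ i)
    have h := HasDerivAt.fun_finsetProd hfac
    convert h using 1
    rfl
    refine (Finset.sum_congr rfl fun i _ => ?_).symm
    simp [smul_eq_mul, mul_comm]
  have hvalue : L B = ((n.choose k : ℝ))⁻¹ * ∑ S ∈ powersetCard k (univ : Finset (Fin n)),
      ∑ i ∈ S, (∏ j ∈ S.erase i, μ j) * μ i ^ 2 := hcomp.unique hT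
  -- Step 4: express the `EMat`s via elementary symmetric functions of the eigenvalues.
  have hchar0 : (Matrix.of A).charpoly = ∏ i : Fin n, (X - C (μ i)) := by
    simpa using key_charpoly A hH 0
  have hE : ∀ j : ℕ, j ≤ n → EMat n j A = ((n.choose j : ℝ))⁻¹ * sigE n j μ := by
    intro j hj
    show ((n.choose j:ℝ))⁻¹ * ((-1:ℝ)^j * (Matrix.of A).charpoly.coeff (n - j)) = _
    rw [hchar0, coeff_prod_X_sub_C' _ hj, ← mul_assoc ((-1:ℝ)^j), hpow j, one_mul]
  have hE1 : EMat n 1 A = (n:ℝ)⁻¹ * sigE n 1 μ := by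
    rw [hE 1 hn, Nat.choose_one_right]
  have hEk : EMat n k A = ((n.choose k : ℝ))⁻¹ * sigE n k μ := hE k hkn
  have hsig0 : k = n → sigE n (k+1) μ = 0 := by
    intro hkeq
    subst hkeq
    rw [sigE, Finset.powersetCard_eq_empty.mpr (by simp), Finset.sum_empty]
  have hEk1 : EMat n (k+1) A = ((n.choose (k+1) : ℝ))⁻¹ * sigE n (k+1) μ := by
    rcases lt_or_eq_of_le hkn with hlt | heq
    · exact hE (k+1) hlt
    · rw [hsig0 heq, heq]
      simp [EMat, Nat.choose_eq_zero_of_lt (Nat.lt_succ_self n)]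
  rw [hLHS, hvalue, comb_identity μ k, hE1, hEk, hEk1]
  -- Step 5: final algebra.
  have hcoef : ((n.choose k:ℝ))⁻¹ * ((k:ℝ)+1) * sigE n (k+1) μ
      = ((n:ℝ)-(k:ℝ)) * ((n.choose (k+1):ℝ))⁻¹ * sigE n (k+1) μ := by
    rcases lt_or_eq_of_le hkn with hlt | heq
    · have hid : n.choose (k+1) * (k+1) = n.choose k * (n - k) := Nat.choose_succ_right_eq n k
      have hck : (n.choose k : ℝ) ≠ 0 := Nat.cast_ne_zero.mpr (Nat.choose_pos hkn).ne'
      have hck1 : (n.choose (k+1) : ℝ) ≠ 0 := Nat.cast_ne_zero.mpr (Nat.choose_pos hlt).ne'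
      have hidR : (n.choose (k+1) : ℝ) * ((k:ℝ)+1) = (n.choose k : ℝ) * ((n:ℝ)-(k:ℝ)) := by
        have := congrArg (fun x : ℕ => (x : ℝ)) hid
        push_cast [Nat.cast_sub hkn] at this
        linarith
      field_simp
      linear_combination sigE n (k+1) μ * hidR
    · rw [hsig0 heq]
      ring
  have hnn : (n:ℝ) * (n:ℝ)⁻¹ = 1 := mul_inv_cancel₀ hn'
  have hck : (n.choose k : ℝ) ≠ 0 := Nat.cast_ne_zero.mpr (Nat.choose_pos hkn).ne'
  linear_combination (-(((n.choose k:ℝ))⁻¹ * sigE n 1 μ * sigE n k μ)) * hnn - hcoef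
end

section
/- Let F(κ) = E_k(κ)/E_{k-1}(κ) on the cone Γ_k^+. Then 1 ≤ ∑_p ∂F/∂κ_p ≤ k. -/
open Finset Polynomial


/-- The normalized `k`-th elementary symmetric function of `κ ∈ ℝⁿ`. -/
noncomputable def Esym (n k : ℕ) (κ : Fin n → ℝ) : ℝ :=
  ((n.choose k : ℝ))⁻¹ * ∑ s ∈ Finset.univ.powersetCard k, ∏ i ∈ s, κ i

noncomputable def EsymDeriv (n m : ℕ) (κ : Fin n → ℝ) : (Fin n → ℝ) →L[ℝ] ℝ :=
  ((n.choose m : ℝ))⁻¹ • ∑ s ∈ Finset.univ.powersetCard m, ∑ i ∈ s,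
    (∏ j ∈ s.erase i, κ j) • ContinuousLinearMap.proj i

theorem hasFDerivAt_Esym (n m : ℕ) (κ : Fin n → ℝ) :
    HasFDerivAt (Esym n m) (EsymDeriv n m κ) κ := by
  have h : ∀ s ∈ Finset.univ.powersetCard m,
      HasFDerivAt (fun κ : Fin n → ℝ => ∏ i ∈ s, κ i)
        (∑ i ∈ s, (∏ j ∈ s.erase i, κ j) • (ContinuousLinearMap.proj i :
          (Fin n → ℝ) →L[ℝ] ℝ)) κ := by
    intro s _
    exact HasFDerivAt.finset_prod (fun i _ => hasFDerivAt_apply i κ)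
  have hsum := HasFDerivAt.fun_sum h
  exact hsum.const_mul _

theorem doubleCount {ι : Type*} [DecidableEq ι] (u : Finset ι) (m : ℕ)
    (f : Finset ι → ι → ℝ) :
    ∑ s ∈ u.powersetCard (m+1), ∑ i ∈ s, f (s.erase i) i
      = ∑ t ∈ u.powersetCard m, ∑ i ∈ u \ t, f t i := by
  rw [Finset.sum_sigma', Finset.sum_sigma']
  refine Finset.sum_nbij' (fun p => ⟨p.1.erase p.2, p.2⟩) (fun p => ⟨insert p.2 p.1, p.2⟩) ?_ ?_ ?_ ?_ ?_
  · rintro ⟨s, i⟩ hp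
    simp only [Finset.mem_sigma, Finset.mem_powersetCard] at hp ⊢
    obtain ⟨⟨hsu, hsc⟩, hi⟩ := hp
    exact ⟨⟨(Finset.erase_subset _ _).trans hsu, by rw [Finset.card_erase_of_mem hi, hsc]; rfl⟩,
      Finset.mem_sdiff.2 ⟨hsu hi, Finset.notMem_erase _ _⟩⟩
  · rintro ⟨t, i⟩ hp
    simp only [Finset.mem_sigma, Finset.mem_powersetCard, Finset.mem_sdiff] at hp ⊢
    obtain ⟨⟨htu, htc⟩, hiu, hit⟩ := hp
    exact ⟨⟨Finset.insert_subset hiu htu, by rw [Finset.card_insert_of_notMem hit, htc]⟩,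
      Finset.mem_insert_self _ _⟩
  · rintro ⟨s, i⟩ hp
    simp only [Finset.mem_sigma, Finset.mem_powersetCard] at hp
    simp [Finset.insert_erase hp.2]
  · rintro ⟨t, i⟩ hp
    simp only [Finset.mem_sigma, Finset.mem_powersetCard, Finset.mem_sdiff] at hp
    simp [Finset.erase_insert hp.2.2]
  · rintro ⟨s, i⟩ _; rfl

theorem sum_apply_EsymDeriv (n m : ℕ) (hm : m + 1 ≤ n) (κ : Fin n → ℝ) :
    ∑ p : Fin n, EsymDeriv n (m+1) κ (Pi.single p 1) = (m+1) * Esym n m κ := by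
  have hsingle : ∀ i : Fin n, ∑ p : Fin n, (Pi.single p (1:ℝ)) i = 1 := by
    intro i
    simp [Pi.single_apply, Finset.sum_ite_eq]
  have step1 : ∑ p : Fin n, EsymDeriv n (m+1) κ (Pi.single p 1)
      = ((n.choose (m+1) : ℝ))⁻¹ *
        ∑ s ∈ Finset.univ.powersetCard (m+1), ∑ i ∈ s, ∏ j ∈ s.erase i, κ j := by
    simp only [EsymDeriv, ContinuousLinearMap.smul_apply, ContinuousLinearMap.sum_apply,
      ContinuousLinearMap.proj_apply, smul_eq_mul]
    rw [← Finset.mul_sum]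
    congr 1
    rw [Finset.sum_comm]
    refine Finset.sum_congr rfl fun s _ => ?_
    rw [Finset.sum_comm]
    refine Finset.sum_congr rfl fun i _ => ?_
    rw [← Finset.mul_sum, hsingle i, mul_one]
  rw [step1, doubleCount Finset.univ m (fun t _ => ∏ j ∈ t, κ j)]
  have hcard : ∀ t ∈ (Finset.univ : Finset (Fin n)).powersetCard m, ((Finset.univ : Finset (Fin n)) \ t).card = n - m := by
    intro t ht
    rw [Finset.card_sdiff_of_subset (Finset.subset_univ t), Finset.card_univ, Fintype.card_fin,
      (Finset.mem_powersetCard.1 ht).2]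
  have step2 : ∑ t ∈ Finset.univ.powersetCard m, ∑ _i ∈ Finset.univ \ t, ∏ j ∈ t, κ j
      = ((n - m : ℕ) : ℝ) * ∑ t ∈ Finset.univ.powersetCard m, ∏ j ∈ t, κ j := by
    rw [Finset.mul_sum]
    refine Finset.sum_congr rfl fun t ht => ?_
    rw [Finset.sum_const, hcard t ht, nsmul_eq_mul]
  rw [step2, Esym]
  have h1 : (n.choose (m+1) : ℝ) ≠ 0 := Nat.cast_ne_zero.2 (Nat.choose_pos hm).ne'
  have h2 : (n.choose m : ℝ) ≠ 0 := Nat.cast_ne_zero.2 (Nat.choose_pos (Nat.le_of_succ_le hm)).ne'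
  have key : ((n.choose (m+1)) * (m+1) : ℝ) = (n.choose m : ℝ) * ((n - m : ℕ) : ℝ) := by
    exact_mod_cast congrArg (Nat.cast : ℕ → ℝ) (Nat.choose_succ_right_eq n m)
  set S := ∑ t ∈ Finset.univ.powersetCard m, ∏ j ∈ t, κ j with hS
  field_simp
  linear_combination (-S) * key

theorem Esym_zero (n : ℕ) (κ : Fin n → ℝ) : Esym n 0 κ = 1 := by
  simp [Esym]

theorem newton_base (m k : ℕ) (hk : k = m + 2) (x : Fin k → ℝ) :
    ((k.choose (m+1) : ℝ))^2 * ((∑ t ∈ (univ : Finset (Fin k)).powersetCard (m+2), ∏ i ∈ t, x i)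
        * (∑ t ∈ (univ : Finset (Fin k)).powersetCard m, ∏ i ∈ t, x i))
      ≤ ((k.choose (m+2) : ℝ)) * (k.choose m) *
        (∑ t ∈ (univ : Finset (Fin k)).powersetCard (m+1), ∏ i ∈ t, x i)^2 := by
  subst hk
  set P : Fin (m+2) → ℝ := fun i => ∏ j ∈ univ.erase i, x j with hP
  have hcu : (univ : Finset (Fin (m+2))).card = m + 2 := Finset.card_fin _
  have hpcself : (univ : Finset (Fin (m+2))).powersetCard (m+2) = {univ} := by
    have h := Finset.powersetCard_self (univ : Finset (Fin (m+2)))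
    rwa [hcu] at h
  -- σ_{m+2} is the full product
  have hprod : (∑ t ∈ (univ : Finset (Fin (m+2))).powersetCard (m+2), ∏ i ∈ t, x i)
      = ∏ i, x i := by rw [hpcself, Finset.sum_singleton]
  -- (a) σ_{m+1} = ∑ P
  have ha : (∑ t ∈ (univ : Finset (Fin (m+2))).powersetCard (m+1), ∏ i ∈ t, x i)
      = ∑ i, P i := by
    have h := doubleCount (univ : Finset (Fin (m+2))) (m+1) (fun t _ => ∏ j ∈ t, x j)
    rw [hpcself, Finset.sum_singleton] at h
    calc ∑ t ∈ (univ : Finset (Fin (m+2))).powersetCard (m+1), ∏ i ∈ t, x i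
        = ∑ t ∈ (univ : Finset (Fin (m+2))).powersetCard (m+1), ∑ i ∈ univ \ t,
            ∏ j ∈ t, x j := by
          refine Finset.sum_congr rfl fun t ht => ?_
          rw [Finset.sum_const, Finset.card_sdiff_of_subset (Finset.subset_univ t), hcu,
            (Finset.mem_powersetCard.1 ht).2, show m+2-(m+1) = 1 from by omega, one_nsmul]
      _ = ∑ i, P i := h.symm
  -- (b) 2 σ_m = double sum
  have hb : ∑ i : Fin (m+2), ∑ j ∈ univ.erase i, ∏ l ∈ (univ.erase i).erase j, x l
      = 2 * ∑ t ∈ (univ : Finset (Fin (m+2))).powersetCard m, ∏ i ∈ t, x i := by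
    have h1 := doubleCount (univ : Finset (Fin (m+2))) (m+1)
      (fun t _ => ∑ j ∈ t, ∏ l ∈ t.erase j, x l)
    rw [hpcself, Finset.sum_singleton] at h1
    have h2 := doubleCount (univ : Finset (Fin (m+2))) m (fun t _ => ∏ l ∈ t, x l)
    calc ∑ i : Fin (m+2), ∑ j ∈ univ.erase i, ∏ l ∈ (univ.erase i).erase j, x l
        = ∑ t ∈ (univ : Finset (Fin (m+2))).powersetCard (m+1), ∑ i ∈ univ \ t,
            ∑ j ∈ t, ∏ l ∈ t.erase j, x l := h1
      _ = ∑ t ∈ (univ : Finset (Fin (m+2))).powersetCard (m+1), ∑ j ∈ t, ∏ l ∈ t.erase j, x l := by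
          refine Finset.sum_congr rfl fun t ht => ?_
          rw [Finset.sum_const, Finset.card_sdiff_of_subset (Finset.subset_univ t), hcu,
            (Finset.mem_powersetCard.1 ht).2, show m+2-(m+1) = 1 from by omega, one_nsmul]
      _ = ∑ t ∈ (univ : Finset (Fin (m+2))).powersetCard m, ∑ i ∈ univ \ t, ∏ l ∈ t, x l := h2
      _ = 2 * ∑ t ∈ (univ : Finset (Fin (m+2))).powersetCard m, ∏ i ∈ t, x i := by
          rw [Finset.mul_sum]
          refine Finset.sum_congr rfl fun t ht => ?_
          rw [Finset.sum_const, Finset.card_sdiff_of_subset (Finset.subset_univ t), hcu,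
            (Finset.mem_powersetCard.1 ht).2, show m+2-m = 2 from by omega, nsmul_eq_mul]
          push_cast
          ring
  -- (c) product identity
  have hc : ∀ i : Fin (m+2), ∀ j ∈ univ.erase i,
      (∏ l, x l) * ∏ l ∈ (univ.erase i).erase j, x l = P i * P j := by
    intro i j hj
    have hji : j ≠ i := Finset.ne_of_mem_erase hj
    have hj' : j ∈ univ.erase i := hj
    have e1 : (∏ l, x l) = x i * ∏ l ∈ univ.erase i, x l :=
      (Finset.mul_prod_erase univ x (Finset.mem_univ i)).symm
    have e2 : (∏ l ∈ univ.erase i, x l) = x j * ∏ l ∈ (univ.erase i).erase j, x l :=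
      (Finset.mul_prod_erase _ x hj').symm
    have e3 : (∏ l ∈ univ.erase j, x l) = x i * ∏ l ∈ (univ.erase j).erase i, x l :=
      (Finset.mul_prod_erase _ x (Finset.mem_erase.2 ⟨fun h => hji h.symm, Finset.mem_univ i⟩)).symm
    have e4 : (univ.erase j).erase i = (univ.erase i).erase j := Finset.erase_right_comm
    show (∏ l, x l) * ∏ l ∈ (univ.erase i).erase j, x l
        = (∏ l ∈ univ.erase i, x l) * (∏ l ∈ univ.erase j, x l)
    rw [e1, e2, e3, e4]
    ring
  -- (d)
  have hd : (∏ l, x l) * (2 * ∑ t ∈ (univ : Finset (Fin (m+2))).powersetCard m, ∏ i ∈ t, x i)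
      = (∑ i, P i)^2 - ∑ i, P i ^ 2 := by
    rw [← hb, Finset.mul_sum]
    have : ∀ i : Fin (m+2), (∏ l, x l) * ∑ j ∈ univ.erase i, ∏ l ∈ (univ.erase i).erase j, x l
        = P i * ((∑ j, P j) - P i) := by
      intro i
      rw [Finset.mul_sum]
      rw [Finset.sum_congr rfl (hc i)]
      rw [← Finset.mul_sum, Finset.sum_erase_eq_sub (Finset.mem_univ i)]
    rw [Finset.sum_congr rfl fun i _ => this i]
    calc ∑ i, P i * ((∑ j, P j) - P i)
        = ∑ i, (P i * (∑ j, P j) - P i^2) := Finset.sum_congr rfl fun i _ => by ring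
      _ = (∑ i, P i) * (∑ j, P j) - ∑ i, P i^2 := by
          rw [Finset.sum_sub_distrib, Finset.sum_mul]
      _ = (∑ i, P i)^2 - ∑ i, P i ^ 2 := by ring
  -- (e) Cauchy-Schwarz
  have hcs : (∑ i, P i)^2 ≤ (m+2 : ℝ) * ∑ i, P i ^ 2 := by
    have := sq_sum_le_card_mul_sum_sq (s := (univ : Finset (Fin (m+2)))) (f := P)
    rw [hcu] at this
    exact_mod_cast this
  -- assemble
  rw [hprod, ha]
  have hch1 : ((m+2).choose (m+1) : ℝ) = (m+2 : ℝ) := by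
    rw [Nat.choose_succ_self_right]; push_cast; ring
  have hch2 : ((m+2).choose (m+2) : ℝ) = 1 := by rw [Nat.choose_self]; norm_num
  have hch0 : ((m+2).choose m : ℝ) * 2 = (m+2 : ℝ) * (m+1) := by
    have h1 : (m+2).choose m = (m+2).choose 2 := by
      rw [← Nat.choose_symm (show 2 ≤ m+2 by omega), Nat.add_sub_cancel]
    have h2 : (m+2).choose 2 * 2 = (m+2)*(m+1) := by
      rw [Nat.choose_two_right, show m+2-1 = m+1 from by omega, mul_comm (m+2) (m+1)]
      exact Nat.div_mul_cancel (Nat.even_mul_succ_self (m+1)).two_dvd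
    have := congrArg (Nat.cast : ℕ → ℝ) (h1 ▸ h2)
    push_cast at this
    linarith [this]
  rw [hch1, hch2]
  nlinarith [hd, hch0,
    mul_le_mul_of_nonneg_left hcs (show (0:ℝ) ≤ (m:ℝ)+2 by positivity)]

theorem newton_multiset (m : ℕ) : ∀ (n : ℕ) (s : Multiset ℝ), Multiset.card s = n → m + 2 ≤ n →
    ((n.choose (m+1) : ℝ))^2 * (s.esymm (m+2) * s.esymm m)
      ≤ ((n.choose (m+2) : ℝ)) * (n.choose m) * (s.esymm (m+1))^2 := by
  intro n
  induction n with
  | zero => intro s h1 h2; omega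
  | succ N ih =>
    intro s hcard hmn
    rcases eq_or_lt_of_le hmn with heq | hlt
    · -- base case : N + 1 = m + 2
      have hlen : s.toList.length = N+1 := by rw [Multiset.length_toList, hcard]
      set x : Fin s.toList.length → ℝ := s.toList.get with hx
      have hs : (Finset.univ.val.map x) = s := by
        rw [hx, Fin.univ_val_map, List.ofFn_get]; exact s.coe_toList
      have hesymm : ∀ j, (∑ t ∈ (univ : Finset (Fin s.toList.length)).powersetCard j,
          ∏ i ∈ t, x i) = s.esymm j := by
        intro j
        have h : (∑ t ∈ (univ : Finset (Fin s.toList.length)).powersetCard j, ∏ i ∈ t, x i)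
            = (Finset.univ.val.map x).esymm j := by
          simp only [← Finset.esymm_map_val]
        rw [h, hs]
      have hbase := newton_base m s.toList.length (by omega) x
      simp only [hlen] at hbase
      rw [← hesymm (m+2), ← hesymm (m+1), ← hesymm m]
      exact hbase
    · -- inductive step
      have hmN : m + 2 ≤ N := by omega
      set p : Polynomial ℝ := (s.map fun r => Polynomial.X + Polynomial.C r).prod with hp
      have hmonic : p.Monic :=
        Polynomial.monic_multiset_prod_of_monic s _ fun r _ => monic_X_add_C r
      have hdeg : p.natDegree = N+1 := by
        rw [hp, Polynomial.natDegree_multiset_prod_of_monic _ (fun f hf => by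
          obtain ⟨r, _, rfl⟩ := Multiset.mem_map.1 hf
          exact monic_X_add_C r)]
        rw [Multiset.map_map]
        simp only [Function.comp, natDegree_X_add_C]
        rw [Multiset.map_const', Multiset.sum_replicate, hcard, smul_eq_mul, mul_one]
      have hcoeff : ∀ j, j ≤ N+1 → p.coeff j = s.esymm (N+1-j) := by
        intro j hj
        rw [hp, Multiset.prod_X_add_C_coeff s (by omega : j ≤ Multiset.card s), hcard]
      have hroots : p.roots = s.map Neg.neg := by
        have hmm : (s.map fun r => Polynomial.X + Polynomial.C r)
            = ((s.map Neg.neg).map fun r => Polynomial.X - Polynomial.C r) := by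
          rw [Multiset.map_map]
          exact Multiset.map_congr rfl fun r _ => by
            simp [Function.comp, sub_eq_add_neg]
        rw [hp, hmm, Polynomial.roots_multiset_prod_X_sub_C]
      have hrootscard : Multiset.card p.roots = N+1 := by rw [hroots, Multiset.card_map, hcard]
      set q := Polynomial.derivative p with hq
      have hqcoeff : ∀ j, q.coeff j = p.coeff (j+1) * (j+1) := fun j => coeff_derivative p j
      have hpN1 : p.coeff (N+1) = 1 := by
        have := hmonic.coeff_natDegree
        rwa [hdeg] at this
      have hqN : q.coeff N = (N+1 : ℝ) := by
        rw [hqcoeff, hpN1, one_mul]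
      have hqne : q.coeff N ≠ 0 := by rw [hqN]; positivity
      have hqdeg : q.natDegree = N := by
        refine le_antisymm ?_ (le_natDegree_of_ne_zero hqne)
        have := natDegree_derivative_le p
        rwa [hdeg, Nat.add_sub_cancel] at this
      have hqroots_le : Multiset.card q.roots ≤ N := hqdeg ▸ q.card_roots'
      have hqroots_ge : Multiset.card p.roots ≤ Multiset.card q.roots + 1 :=
        p.card_roots_le_derivative
      have hqcard : Multiset.card q.roots = N := by
        rw [hrootscard] at hqroots_ge; omega
      have hqsplits : q.Splits :=
        splits_iff_card_roots.2 (by rw [hqcard, hqdeg])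
      have hqlc : q.leadingCoeff = (N+1 : ℝ) := by
        rw [Polynomial.leadingCoeff, hqdeg, hqN]
      set s' : Multiset ℝ := q.roots.map Neg.neg with hs'
      have hs'card : Multiset.card s' = N := by rw [hs', Multiset.card_map, hqcard]
      have hfact2 : q = Polynomial.C ((N+1:ℝ)) * (s'.map fun r => Polynomial.X + Polynomial.C r).prod := by
        have h := hqsplits.eq_prod_roots
        rw [hqlc] at h
        rw [h]
        congr 1
        rw [hs', Multiset.map_map]
        exact congrArg Multiset.prod (Multiset.map_congr rfl fun r _ => by
          simp [Function.comp, sub_eq_add_neg])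
      have hq_es : ∀ j, j ≤ N → q.coeff j = (N+1 : ℝ) * s'.esymm (N - j) := by
        intro j hj
        calc q.coeff j = (Polynomial.C ((N+1:ℝ)) * (s'.map fun r => Polynomial.X + Polynomial.C r).prod).coeff j := by
              rw [← hfact2]
          _ = (N+1:ℝ) * ((s'.map fun r => Polynomial.X + Polynomial.C r).prod).coeff j := by
              rw [coeff_C_mul]
          _ = (N+1:ℝ) * s'.esymm (N - j) := by
              rw [Multiset.prod_X_add_C_coeff s' (by omega : j ≤ Multiset.card s'), hs'card]
      have hrel : ∀ i, i ≤ N → (N+1:ℝ) * s'.esymm i = ((N+1-i : ℕ) : ℝ) * s.esymm i := by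
        intro i hi
        have h1 := hq_es (N-i) (by omega)
        rw [show N-(N-i) = i from by omega] at h1
        have h2 := hqcoeff (N-i)
        have h3 := hcoeff (N-i+1) (by omega)
        rw [show N+1-(N-i+1) = i from by omega] at h3
        rw [h2, h3] at h1
        rw [← h1, show N+1-i = (N-i)+1 from by omega]
        push_cast
        ring
      -- apply IH to s'
      have hih := ih s' hs'card hmN
      have natid : ∀ j, (N+1) * N.choose j = (N+1).choose j * (N+1-j) := by
        intro j
        have h1 := Nat.add_one_mul_choose_eq N j
        have h2 := Nat.choose_succ_right_eq (N+1) j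
        exact h1.trans h2
      have id2 : ((N:ℝ)+1) * ((N.choose (m+2) : ℝ)) = (((N+1).choose (m+2) : ℝ)) * (((N+1-(m+2) : ℕ) : ℝ)) := by exact_mod_cast natid (m+2)
      have id1 : ((N:ℝ)+1) * ((N.choose (m+1) : ℝ)) = (((N+1).choose (m+1) : ℝ)) * (((N+1-(m+1) : ℕ) : ℝ)) := by exact_mod_cast natid (m+1)
      have id0 : ((N:ℝ)+1) * ((N.choose m : ℝ)) = (((N+1).choose m : ℝ)) * (((N+1-m : ℕ) : ℝ)) := by exact_mod_cast natid m
      have rel2 : ((N:ℝ)+1) * (s'.esymm (m+2)) = (((N+1-(m+2) : ℕ) : ℝ)) * (s.esymm (m+2)) := hrel (m+2) (by omega)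
      have rel1 : ((N:ℝ)+1) * (s'.esymm (m+1)) = (((N+1-(m+1) : ℕ) : ℝ)) * (s.esymm (m+1)) := hrel (m+1) (by omega)
      have rel0 : ((N:ℝ)+1) * (s'.esymm m) = (((N+1-m : ℕ) : ℝ)) * (s.esymm m) := hrel m (by omega)
      have hcpos2 : (0:ℝ) < (((N+1-(m+2) : ℕ) : ℝ)) := by exact_mod_cast Nat.sub_pos_of_lt (by omega)
      have hcpos1 : (0:ℝ) < (((N+1-(m+1) : ℕ) : ℝ)) := by exact_mod_cast Nat.sub_pos_of_lt (by omega)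
      have hcpos0 : (0:ℝ) < (((N+1-m : ℕ) : ℝ)) := by exact_mod_cast Nat.sub_pos_of_lt (by omega)
      have hnpos : (0:ℝ) < ((N:ℝ)+1) := by positivity
      have hpos : (0:ℝ) < (((N+1-m : ℕ) : ℝ))*(((N+1-(m+1) : ℕ) : ℝ))^2*(((N+1-(m+2) : ℕ) : ℝ)) := by positivity
      have key : ((((N+1-m : ℕ) : ℝ))*(((N+1-(m+1) : ℕ) : ℝ))^2*(((N+1-(m+2) : ℕ) : ℝ))) * ((((N+1).choose (m+1) : ℝ))^2*((s.esymm (m+2))*(s.esymm m)))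
          ≤ ((((N+1-m : ℕ) : ℝ))*(((N+1-(m+1) : ℕ) : ℝ))^2*(((N+1-(m+2) : ℕ) : ℝ))) * ((((N+1).choose (m+2) : ℝ))*(((N+1).choose m : ℝ))*(s.esymm (m+1))^2) := by
        have hmul := mul_le_mul_of_nonneg_left hih (show (0:ℝ) ≤ ((N:ℝ)+1)^4 by positivity)
        calc ((((N+1-m : ℕ) : ℝ))*(((N+1-(m+1) : ℕ) : ℝ))^2*(((N+1-(m+2) : ℕ) : ℝ))) * ((((N+1).choose (m+1) : ℝ))^2*((s.esymm (m+2))*(s.esymm m)))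
            = ((N:ℝ)+1)^4 * (((N.choose (m+1) : ℝ))^2*((s'.esymm (m+2))*(s'.esymm m))) := by
              linear_combination (-((((N+1).choose (m+1) : ℝ))*(((N+1-(m+1) : ℕ) : ℝ)) + ((N:ℝ)+1)*((N.choose (m+1) : ℝ)))*((((N+1-(m+2) : ℕ) : ℝ))*(s.esymm (m+2)))*((((N+1-m : ℕ) : ℝ))*(s.esymm m))) * id1
                + (-((((N:ℝ)+1)*((N.choose (m+1) : ℝ)))^2)*((((N+1-m : ℕ) : ℝ))*(s.esymm m))) * rel2 + (-((((N:ℝ)+1)*((N.choose (m+1) : ℝ)))^2)*(((N:ℝ)+1)*(s'.esymm (m+2)))) * rel0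
          _ ≤ ((N:ℝ)+1)^4 * (((N.choose (m+2) : ℝ))*((N.choose m : ℝ))*(s'.esymm (m+1))^2) := hmul
          _ = ((((N+1-m : ℕ) : ℝ))*(((N+1-(m+1) : ℕ) : ℝ))^2*(((N+1-(m+2) : ℕ) : ℝ))) * ((((N+1).choose (m+2) : ℝ))*(((N+1).choose m : ℝ))*(s.esymm (m+1))^2) := by
              linear_combination (((((N+1).choose m : ℝ))*(((N+1-m : ℕ) : ℝ)))*((((N+1-(m+1) : ℕ) : ℝ))*(s.esymm (m+1)))^2) * id2 + ((((N:ℝ)+1)*((N.choose (m+2) : ℝ)))*((((N+1-(m+1) : ℕ) : ℝ))*(s.esymm (m+1)))^2) * id0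
                + ((((N:ℝ)+1)*((N.choose (m+2) : ℝ)))*(((N:ℝ)+1)*((N.choose m : ℝ)))*((((N+1-(m+1) : ℕ) : ℝ))*(s.esymm (m+1)) + ((N:ℝ)+1)*(s'.esymm (m+1)))) * rel1
      exact le_of_mul_le_mul_left key hpos

theorem newtonEsym (n k' : ℕ) (hkn : k' + 2 ≤ n) (κ : Fin n → ℝ) :
    Esym n (k'+2) κ * Esym n k' κ ≤ Esym n (k'+1) κ ^ 2 := by
  set s : Multiset ℝ := Finset.univ.val.map κ with hsdef
  have hcard : Multiset.card s = n := by
    rw [hsdef, Multiset.card_map]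
    exact Finset.card_fin n
  have hE : ∀ j, Esym n j κ = ((n.choose j : ℝ))⁻¹ * s.esymm j := by
    intro j
    rw [Esym]
    congr 1
    have h : (∑ t ∈ (univ : Finset (Fin n)).powersetCard j, ∏ i ∈ t, κ i)
        = (Finset.univ.val.map κ).esymm j := by
      simp only [← Finset.esymm_map_val]
    rw [h, ← hsdef]
  have h := newton_multiset k' n s hcard hkn
  have ha2 : (0:ℝ) < (n.choose (k'+2) : ℝ) := by exact_mod_cast Nat.choose_pos (by omega)
  have ha1 : (0:ℝ) < (n.choose (k'+1) : ℝ) := by exact_mod_cast Nat.choose_pos (by omega)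
  have ha0 : (0:ℝ) < (n.choose k' : ℝ) := by exact_mod_cast Nat.choose_pos (by omega)
  rw [hE (k'+2), hE (k'+1), hE k']
  have key : (s.esymm (k'+2) * s.esymm k') / ((n.choose (k'+2) : ℝ) * (n.choose k'))
      ≤ (s.esymm (k'+1))^2 / ((n.choose (k'+1) : ℝ))^2 :=
    (div_le_div_iff₀ (by positivity) (by positivity)).2 (by linear_combination h)
  calc ((n.choose (k'+2) : ℝ))⁻¹ * s.esymm (k'+2) * (((n.choose k' : ℝ))⁻¹ * s.esymm k')
      = (s.esymm (k'+2) * s.esymm k') / ((n.choose (k'+2) : ℝ) * (n.choose k')) := by ring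
    _ ≤ (s.esymm (k'+1))^2 / ((n.choose (k'+1) : ℝ))^2 := key
    _ = (((n.choose (k'+1) : ℝ))⁻¹ * s.esymm (k'+1))^2 := by ring


/-- The positive cone `Γ_k^+`. -/
def GammaPlus (n k : ℕ) : Set (Fin n → ℝ) :=
  {x | ∀ i : ℕ, 1 ≤ i → i ≤ k → 0 < Esym n i x}

/-- The curvature quotient `F = E_k / E_{k-1}`. -/
noncomputable def Fquot (n k : ℕ) (κ : Fin n → ℝ) : ℝ :=
  Esym n k κ / Esym n (k - 1) κ

/-- on `Γ_k^+`, `1 ≤ ∑_p ∂F/∂κ_p ≤ k`. -/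

theorem statement4 (n k : ℕ) (hn : 2 ≤ n) (hk1 : 1 ≤ k) (hkn : k ≤ n)
    (κ : Fin n → ℝ) (hκ : κ ∈ GammaPlus n k) :
    1 ≤ ∑ p : Fin n, fderiv ℝ (Fquot n k) κ (Pi.single p 1) ∧
      ∑ p : Fin n, fderiv ℝ (Fquot n k) κ (Pi.single p 1) ≤ (k : ℝ) := by
  rcases Nat.lt_or_ge k 2 with hk2 | hk2
  · -- k = 1
    interval_cases k
    have hF : Fquot n 1 = Esym n 1 := by
      funext x
      rw [Fquot, Esym_zero, div_one]
    rw [hF]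
    have hone : ∀ p : Fin n, fderiv ℝ (Esym n 1) κ (Pi.single p 1)
        = EsymDeriv n 1 κ (Pi.single p 1) := fun p => by
      rw [(hasFDerivAt_Esym n 1 κ).fderiv]
    simp only [hone]
    rw [sum_apply_EsymDeriv n 0 (by omega) κ, Esym_zero]
    norm_num
  · -- k ≥ 2
    obtain ⟨k', rfl⟩ : ∃ k', k = k' + 2 := ⟨k - 2, by omega⟩
    have ha : 0 < Esym n (k'+1) κ := hκ (k'+1) (by omega) (by omega)
    have hb : 0 < Esym n (k'+2) κ := hκ (k'+2) (by omega) (by omega)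
    have hc : 0 < Esym n k' κ := by
      rcases Nat.eq_zero_or_pos k' with h0 | h0
      · rw [h0, Esym_zero]; norm_num
      · exact hκ k' h0 (by omega)
    set a := Esym n (k'+1) κ with haa
    have hinv : HasFDerivAt (fun x => (Esym n (k'+1) x)⁻¹)
        ((-(ContinuousLinearMap.mulLeftRight ℝ ℝ a⁻¹ a⁻¹)).comp (EsymDeriv n (k'+1) κ)) κ :=
      (hasFDerivAt_inv' ha.ne').comp κ (hasFDerivAt_Esym n (k'+1) κ)
    have hFd : HasFDerivAt (Fquot n (k'+2))
        (Esym n (k'+2) κ • ((-(ContinuousLinearMap.mulLeftRight ℝ ℝ a⁻¹ a⁻¹)).comp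
            (EsymDeriv n (k'+1) κ)) + a⁻¹ • EsymDeriv n (k'+2) κ) κ := by
      have : Fquot n (k'+2) = fun x => Esym n (k'+2) x * (Esym n (k'+1) x)⁻¹ := by
        funext x; rw [Fquot]; norm_num [div_eq_mul_inv]
      rw [this]
      exact (hasFDerivAt_Esym n (k'+2) κ).mul hinv
    rw [hFd.fderiv]
    have e1 : ∑ p : Fin n, EsymDeriv n (k'+2) κ (Pi.single p 1)
        = (((k'+1 : ℕ) : ℝ) + 1) * Esym n (k'+1) κ :=
      sum_apply_EsymDeriv n (k'+1) (by omega) κ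
    have e0 := sum_apply_EsymDeriv n k' (by omega) κ
    have hsum : ∑ p : Fin n, (Esym n (k'+2) κ • ((-(ContinuousLinearMap.mulLeftRight ℝ ℝ a⁻¹ a⁻¹)).comp
            (EsymDeriv n (k'+1) κ)) + a⁻¹ • EsymDeriv n (k'+2) κ) (Pi.single p 1)
        = Esym n (k'+2) κ * (-(a⁻¹ * (∑ p : Fin n, EsymDeriv n (k'+1) κ (Pi.single p 1)) * a⁻¹))
          + a⁻¹ * (∑ p : Fin n, EsymDeriv n (k'+2) κ (Pi.single p 1)) := by
      simp only [ContinuousLinearMap.add_apply, ContinuousLinearMap.smul_apply,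
        ContinuousLinearMap.comp_apply, ContinuousLinearMap.neg_apply,
        ContinuousLinearMap.mulLeftRight_apply, smul_eq_mul]
      rw [Finset.sum_add_distrib]
      congr 1
      · calc ∑ i : Fin n, Esym n (k'+2) κ * -(a⁻¹ * (EsymDeriv n (k'+1) κ) (Pi.single i 1) * a⁻¹)
              = ∑ i : Fin n, (Esym n (k'+2) κ * -(a⁻¹ * a⁻¹)) *
                  (EsymDeriv n (k'+1) κ) (Pi.single i 1) :=
            Finset.sum_congr rfl fun i _ => by ring
          _ = (Esym n (k'+2) κ * -(a⁻¹ * a⁻¹)) *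
                ∑ i : Fin n, (EsymDeriv n (k'+1) κ) (Pi.single i 1) := by
            rw [← Finset.mul_sum]
          _ = Esym n (k'+2) κ *
                -((a⁻¹ * ∑ p : Fin n, (EsymDeriv n (k'+1) κ) (Pi.single p 1)) * a⁻¹) := by ring
      · rw [Finset.mul_sum]
    rw [hsum, e0, e1]
    set x := Esym n (k'+2) κ with hx
    set y := Esym n k' κ with hy
    have hnewton : x * y ≤ a ^ 2 := newtonEsym n k' (by omega) κ
    have hsq : (0:ℝ) < a ^ 2 := by positivity
    have hS : x * (-(a⁻¹ * ((↑k' + 1) * y) * a⁻¹)) + a⁻¹ * ((((k'+1 : ℕ) : ℝ) + 1) * a)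
        = (↑k' + 2) - (↑k' + 1) * ((x * y) / a ^ 2) := by
      field_simp
      push_cast
      ring
    rw [hS]
    have ht1 : (x * y) / a ^ 2 ≤ 1 := (div_le_one hsq).2 hnewton
    have ht0 : 0 < (x * y) / a ^ 2 := by positivity
    have hcast : ((k' + 2 : ℕ) : ℝ) = (k' : ℝ) + 2 := by push_cast; ring
    constructor
    · nlinarith
    · rw [hcast]; nlinarith
end

section
/- The function F(κ) = E_k(κ)/E_{k-1}(κ) is strictly increasing on Γ_k^+, i.e. ∂F/∂κ_p > 0 for every p = 1,…,n and every κ ∈ Γ_k^+. -/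
section NewtonInequality


open Polynomial

namespace St6

lemma splits_derivative (p : ℝ[X]) (hp : p.Splits) :
    (derivative p).Splits := by
  rcases eq_or_ne (derivative p) 0 with h0 | h0
  · rw [h0]; exact Splits.zero
  have hd0 : p.natDegree ≠ 0 := by
    intro h
    rw [p.eq_C_of_natDegree_eq_zero h] at h0
    simp at h0
  rw [splits_iff_card_roots] at hp ⊢
  have hdd : (derivative p).natDegree = p.natDegree - 1 :=
    natDegree_eq_of_degree_eq_some (degree_derivative_eq p (Nat.pos_of_ne_zero hd0))
  have h1 := p.card_roots_le_derivative
  have h2 := (derivative p).card_roots'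
  omega

lemma splits_iterate_derivative (p : ℝ[X]) (k : ℕ) (hp : p.Splits) :
    (derivative^[k] p).Splits := by
  induction k with
  | zero => simpa using hp
  | succ k ih => rw [Function.iterate_succ_apply']; exact splits_derivative _ ih

lemma splits_multiset_prod (s : Multiset ℝ[X]) (h : ∀ q ∈ s, q.Splits) :
    s.prod.Splits := by
  induction s using Multiset.induction_on with
  | empty => simpa using Splits.one
  | cons a s ih =>
      rw [Multiset.prod_cons]
      exact Splits.mul (h a (by simp)) (ih fun q hq => h q (by simp [hq]))

lemma reverse_multiset_prod (s : Multiset ℝ[X]) : s.prod.reverse = (s.map reverse).prod := by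
  induction s using Multiset.induction_on with
  | empty => simp only [Multiset.map_zero, Multiset.prod_zero]; rw [show (1 : ℝ[X]) = C 1 by simp, reverse_C]
  | cons a s ih => simp [reverse_mul_of_domain, ih]

lemma splits_reverse (p : ℝ[X]) (hp : p.Splits) :
    p.reverse.Splits := by
  rcases eq_or_ne p 0 with rfl | hp0
  · rw [reverse_zero]; exact Splits.zero
  have hfact := hp.eq_prod_roots
  rw [show p.reverse = (C p.leadingCoeff * (p.roots.map fun a => X - C a).prod).reverse by
      rw [← hfact]]
  rw [reverse_mul_of_domain, reverse_multiset_prod, Multiset.map_map]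
  apply Splits.mul
  · exact Splits.of_natDegree_le_one (le_trans (reverse_natDegree_le _) (by simp))
  · apply splits_multiset_prod
    intro q hq
    simp only [Multiset.mem_map, Function.comp] at hq
    obtain ⟨a, _, rfl⟩ := hq
    exact Splits.of_natDegree_le_one
      (le_trans (reverse_natDegree_le _) (by simp [natDegree_X_sub_C]))

lemma natDegree_iterate_derivative_eq (p : ℝ[X]) (k : ℕ) (h : k ≤ p.natDegree) :
    (derivative^[k] p).natDegree = p.natDegree - k := by
  induction k with
  | zero => simp
  | succ k ih =>
    have h1 := ih (by omega)
    rw [Function.iterate_succ_apply',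
      natDegree_eq_of_degree_eq_some (degree_derivative_eq _ (by omega)), h1]
    omega

end St6

namespace St6
open Polynomial Nat

lemma descFactorial_one_add (i : ℕ) : (1 + i).descFactorial i = (i + 1)! := by
  rw [Nat.add_comm 1 i]
  have h := Nat.descFactorial_succ (i + 1) i
  rw [show i + 1 - i = 1 by omega, one_mul] at h
  rw [← h, Nat.descFactorial_self]

lemma two_mul_descFactorial_two_add (i : ℕ) :
    2 * ((2 + i).descFactorial i) = (i + 2)! := by
  rw [Nat.add_comm 2 i]
  have ha := Nat.descFactorial_succ (i + 2) (i + 1)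
  rw [show i + 2 - (i + 1) = 1 by omega, one_mul] at ha
  have hb := Nat.descFactorial_succ (i + 2) i
  rw [show i + 2 - i = 2 by omega] at hb
  rw [← hb, ← ha, Nat.descFactorial_self]

/-- Newton's inequality, in the strict form needed: if `e_{i+2} e_i > 0` then
`e_{i+2} e_i < e_{i+1}^2` (unnormalized elementary symmetric functions, with the
strictness coming from the binomial-normalization constants). -/
lemma newton_lt (S : Multiset ℝ) (i u : ℕ) (hcard : Multiset.card S = i + 2 + u)
    (hpos : 0 < S.esymm (i + 2) * S.esymm i) :
    S.esymm (i + 2) * S.esymm i < S.esymm (i + 1) ^ 2 := by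
  classical
  set m := i + 2 + u with hm
  set p : ℝ[X] := (S.map fun r => X + C r).prod with hpdef
  have hsp : p.Splits := by
    apply splits_multiset_prod
    intro q hq
    obtain ⟨a, _, rfl⟩ := Multiset.mem_map.mp hq
    exact Splits.of_natDegree_le_one (natDegree_X_add_C a).le
  have hmono : ∀ f ∈ S.map fun r => X + C r, Monic f := by
    intro f hf
    obtain ⟨a, _, rfl⟩ := Multiset.mem_map.mp hf
    exact monic_X_add_C a
  have hdeg : p.natDegree = m := by
    rw [hpdef, natDegree_multiset_prod_of_monic _ hmono, Multiset.map_map]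
    simp [Function.comp, natDegree_X_add_C, hcard]
  have hc : ∀ t, t ≤ m → p.coeff t = S.esymm (m - t) := by
    intro t ht
    rw [hpdef, Multiset.prod_X_add_C_coeff S (by omega), hcard]
  set p1 : ℝ[X] := derivative^[u] p with hp1def
  have hp1c : ∀ t, t ≤ i + 2 → p1.coeff t =
      ((t + u).descFactorial u : ℝ) * S.esymm (i + 2 - t) := by
    intro t ht
    rw [hp1def, coeff_iterate_derivative, hc (t + u) (by omega), nsmul_eq_mul]
    congr 2
    omega
  have hp1deg : p1.natDegree = i + 2 := by
    rw [hp1def, natDegree_iterate_derivative_eq p u (by omega), hdeg]; omega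
  have hp1sp : p1.Splits := splits_iterate_derivative _ _ hsp
  set r : ℝ[X] := p1.reverse with hrdef
  have hrc : ∀ t, t ≤ i + 2 → r.coeff t = p1.coeff (i + 2 - t) := by
    intro t ht
    rw [hrdef, coeff_reverse, hp1deg, revAt_le ht]
  have hrh : ∀ t, i + 2 < t → r.coeff t = 0 := by
    intro t ht
    apply coeff_eq_zero_of_natDegree_lt
    calc r.natDegree ≤ p1.natDegree := reverse_natDegree_le _
    _ < t := by omega
  have hrsp : r.Splits := splits_reverse _ hp1sp
  set q : ℝ[X] := derivative^[i] r with hqdef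
  have hqc : ∀ t, q.coeff t = ((t + i).descFactorial i : ℝ) * r.coeff (t + i) := by
    intro t
    rw [hqdef, coeff_iterate_derivative, nsmul_eq_mul]
  have hq2 : q.coeff 2 = ((2 + i).descFactorial i : ℝ) *
      ((u.descFactorial u : ℝ) * S.esymm (i + 2)) := by
    rw [hqc 2, hrc (2 + i) (by omega), show i + 2 - (2 + i) = 0 by omega,
      hp1c 0 (by omega)]
    norm_num
  have hq1 : q.coeff 1 = ((1 + i).descFactorial i : ℝ) *
      (((1 + u).descFactorial u : ℝ) * S.esymm (i + 1)) := by
    rw [hqc 1, hrc (1 + i) (by omega), show i + 2 - (1 + i) = 1 by omega,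
      hp1c 1 (by omega)]
    norm_num
  have hq0 : q.coeff 0 = ((i.descFactorial i : ℝ)) *
      (((2 + u).descFactorial u : ℝ) * S.esymm i) := by
    rw [hqc 0, hrc (0 + i) (by omega), show i + 2 - (0 + i) = 2 by omega,
      hp1c 2 (by omega)]
    norm_num
  have he2 : S.esymm (i + 2) ≠ 0 := by
    intro h; rw [h, zero_mul] at hpos; exact lt_irrefl 0 hpos
  have hAne : q.coeff 2 ≠ 0 := by
    rw [hq2]
    have h1 : (0:ℝ) < ((2 + i).descFactorial i : ℝ) := by
      exact_mod_cast Nat.pos_of_ne_zero (fun h => by have := Nat.descFactorial_eq_zero_iff_lt.mp h; omega)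
    have h2 : (0:ℝ) < ((u.descFactorial u : ℝ)) := by
      exact_mod_cast Nat.pos_of_ne_zero (fun h => by have := Nat.descFactorial_eq_zero_iff_lt.mp h; omega)
    positivity
  have hqsp : q.Splits := splits_iterate_derivative _ _ hrsp
  have hqdeg : q.natDegree = 2 := by
    apply le_antisymm
    · rw [natDegree_le_iff_coeff_eq_zero]
      intro t ht
      rw [hqc t, hrh (t + i) (by omega), mul_zero]
    · exact le_natDegree_of_ne_zero hAne
  have hqne : q ≠ 0 := fun h => hAne (by simp [h])
  have hcard2 : Multiset.card q.roots = 2 := by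
    rw [← hqdeg]; exact splits_iff_card_roots.mp hqsp
  obtain ⟨x, hx⟩ := Multiset.card_pos_iff_exists_mem.mp (by rw [hcard2]; norm_num)
  have hroot : q.eval x = 0 := (mem_roots hqne).mp hx
  have heval : q.coeff 2 * (x * x) + q.coeff 1 * x + q.coeff 0 = 0 := by
    have := eval_eq_sum_range (p := q) (x := x)
    rw [hqdeg] at this
    rw [Finset.sum_range_succ, Finset.sum_range_succ, Finset.sum_range_succ,
      Finset.sum_range_zero] at this
    rw [hroot] at this
    rw [show q.coeff 2 * (x * x) + q.coeff 1 * x + q.coeff 0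
        = 0 + q.coeff 0 * x ^ 0 + q.coeff 1 * x ^ 1 + q.coeff 2 * x ^ 2 by ring]
    linarith [this]
  have hdisc : discrim (q.coeff 2) (q.coeff 1) (q.coeff 0) = (2 * q.coeff 2 * x + q.coeff 1) ^ 2 :=
    (quadratic_eq_zero_iff_discrim_eq_sq hAne x).mp heval
  have hBB : 0 ≤ q.coeff 1 ^ 2 - 4 * q.coeff 2 * q.coeff 0 := by
    have := sq_nonneg (2 * q.coeff 2 * x + q.coeff 1)
    rw [← hdisc] at this
    rw [discrim] at this
    linarith
  -- now the constants
  have d1i := descFactorial_one_add i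
  have d1u := descFactorial_one_add u
  have d2i := two_mul_descFactorial_two_add i
  have d2u := two_mul_descFactorial_two_add u
  have dii : i.descFactorial i = i ! := Nat.descFactorial_self i
  have duu : u.descFactorial u = u ! := Nat.descFactorial_self u
  set K1 : ℕ := ((1 + i).descFactorial i * (1 + u).descFactorial u) ^ 2 with hK1
  set K2 : ℕ := 4 * ((2 + i).descFactorial i * u.descFactorial u) *
      (i.descFactorial i * (2 + u).descFactorial u) with hK2
  have hKK : K1 < K2 := by
    have e1 : K1 = ((i+1)! * (u+1)!) ^ 2 := by rw [hK1, d1i, d1u]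
    have e2 : K2 = ((i+2)! * i !) * ((u+2)! * u !) := by
      rw [hK2, dii, duu]
      have : 4 * ((2 + i).descFactorial i * u !) * (i ! * (2 + u).descFactorial u)
          = (2 * (2 + i).descFactorial i) * (2 * (2 + u).descFactorial u) * (i ! * u !) := by
        ring
      rw [this, d2i, d2u]; ring
    rw [e1, e2]
    have hfi : 0 < i ! := Nat.factorial_pos i
    have hfu : 0 < u ! := Nat.factorial_pos u
    have h0 : 0 < (i+1) * (u+1) := by positivity
    have h1 : (i+1) * (u+1) < (i+2) * (u+2) := by nlinarith
    have h2 := mul_lt_mul_of_pos_right h1 h0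
    have key : ((i+1) * (u+1)) ^ 2 < ((i+2) * (i+1)) * ((u+2) * (u+1)) := by
      calc ((i+1) * (u+1)) ^ 2 = (i+1) * (u+1) * ((i+1) * (u+1)) := by ring
      _ < (i+2) * (u+2) * ((i+1) * (u+1)) := h2
      _ = ((i+2) * (i+1)) * ((u+2) * (u+1)) := by ring
    calc ((i+1)! * (u+1)!) ^ 2 = ((i+1) * (u+1)) ^ 2 * (i ! * u !) ^ 2 := by
          rw [Nat.factorial_succ, Nat.factorial_succ]; ring
    _ < (((i+2) * (i+1)) * ((u+2) * (u+1))) * (i ! * u !) ^ 2 :=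
          mul_lt_mul_of_pos_right key (pow_pos (Nat.mul_pos hfi hfu) 2)
    _ = ((i+2)! * i !) * ((u+2)! * u !) := by
          rw [Nat.factorial_succ (i+1), Nat.factorial_succ i,
            Nat.factorial_succ (u+1), Nat.factorial_succ u]; ring
  -- transfer hBB to esymm inequality
  have hBB2 : (K2 : ℝ) * (S.esymm (i + 2) * S.esymm i) ≤ (K1 : ℝ) * S.esymm (i + 1) ^ 2 := by
    have hEq : (K1 : ℝ) * S.esymm (i + 1) ^ 2 - (K2 : ℝ) * (S.esymm (i + 2) * S.esymm i)
        = q.coeff 1 ^ 2 - 4 * q.coeff 2 * q.coeff 0 := by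
      rw [hq2, hq1, hq0, hK1, hK2]
      push_cast
      ring
    linarith [hBB, hEq]
  have hK1pos : (0:ℝ) < K1 := by
    rw [hK1]
    have h1 : 0 < (1 + i).descFactorial i := Nat.pos_of_ne_zero (fun h => by have := Nat.descFactorial_eq_zero_iff_lt.mp h; omega)
    have h2 : 0 < (1 + u).descFactorial u := Nat.pos_of_ne_zero (fun h => by have := Nat.descFactorial_eq_zero_iff_lt.mp h; omega)
    positivity
  have hlt : (K1 : ℝ) * (S.esymm (i + 2) * S.esymm i) < (K1 : ℝ) * S.esymm (i + 1) ^ 2 := by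
    have : (K1 : ℝ) * (S.esymm (i + 2) * S.esymm i) < (K2 : ℝ) * (S.esymm (i + 2) * S.esymm i) := by
      apply mul_lt_mul_of_pos_right _ hpos
      exact_mod_cast hKK
    linarith
  exact lt_of_mul_lt_mul_left hlt (le_of_lt hK1pos)

end St6

end NewtonInequality

section DerivMachinery
namespace St6

open Finset

variable {n : ℕ}

/-- The derivative of the (unnormalized) elementary symmetric polynomial. -/
noncomputable def L (n j : ℕ) (κ : Fin n → ℝ) : (Fin n → ℝ) →L[ℝ] ℝ :=
  ∑ s ∈ Finset.univ.powersetCard j, ∑ i ∈ s,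
    (∏ l ∈ s.erase i, κ l) • ContinuousLinearMap.proj i

lemma hasFDerivAt_esym (n j : ℕ) (κ : Fin n → ℝ) :
    HasFDerivAt (Esym n j) (((n.choose j : ℝ))⁻¹ • L n j κ) κ := by
  have h : HasFDerivAt (fun κ : Fin n → ℝ => ∑ s ∈ Finset.univ.powersetCard j, ∏ i ∈ s, κ i)
      (L n j κ) κ :=
    HasFDerivAt.fun_sum (fun s _ => hasFDerivAt_finset_prod)
  exact h.const_mul _

lemma L_apply (j : ℕ) (κ : Fin n → ℝ) (p : Fin n) :
    L n j κ (Pi.single p 1) =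
      ∑ s ∈ Finset.univ.powersetCard j, (if p ∈ s then ∏ l ∈ s.erase p, κ l else 0) := by
  classical
  simp only [L, ContinuousLinearMap.sum_apply, ContinuousLinearMap.smul_apply,
    ContinuousLinearMap.proj_apply, smul_eq_mul]
  refine Finset.sum_congr rfl fun s _ => ?_
  rw [← Finset.sum_ite_eq' s p (fun i => ∏ l ∈ s.erase i, κ l)]
  refine Finset.sum_congr rfl fun i _ => ?_
  rcases eq_or_ne i p with rfl | h
  · simp
  · simp [Pi.single_eq_of_ne h, if_neg h]

lemma sum_powersetCard_ite (j : ℕ) (p : Fin n) (g : Finset (Fin n) → ℝ) :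
    ∑ s ∈ Finset.univ.powersetCard (j + 1), (if p ∈ s then g s else 0)
      = ∑ t ∈ (Finset.univ.erase p).powersetCard j, g (insert p t) := by
  classical
  rw [Finset.sum_ite, Finset.sum_const_zero, add_zero]
  refine Finset.sum_nbij' (fun s => s.erase p) (fun t => insert p t) ?_ ?_ ?_ ?_ ?_
  · intro s hs
    simp only [Finset.mem_filter, Finset.mem_powersetCard] at hs
    obtain ⟨⟨hsub, hcard⟩, hps⟩ := hs
    simp only [Finset.mem_powersetCard]
    constructor
    · intro x hx
      simp only [Finset.mem_erase] at hx ⊢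
      exact ⟨hx.1, hsub hx.2⟩
    · rw [Finset.card_erase_of_mem hps, hcard]
      omega
  · intro t ht
    simp only [Finset.mem_powersetCard] at ht
    obtain ⟨hsub, hcard⟩ := ht
    have hpt : p ∉ t := fun h => (Finset.mem_erase.mp (hsub h)).1 rfl
    simp only [Finset.mem_filter, Finset.mem_powersetCard]
    refine ⟨⟨Finset.subset_univ _, ?_⟩, Finset.mem_insert_self p t⟩
    rw [Finset.card_insert_of_notMem hpt, hcard]
  · intro s hs
    simp only [Finset.mem_filter] at hs
    exact Finset.insert_erase hs.2
  · intro t ht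
    simp only [Finset.mem_powersetCard] at ht
    have hpt : p ∉ t := fun h => (Finset.mem_erase.mp (ht.1 h)).1 rfl
    exact Finset.erase_insert hpt
  · intro s hs
    simp only [Finset.mem_filter] at hs
    rw [Finset.insert_erase hs.2]

lemma filter_not_mem_powersetCard (j : ℕ) (p : Fin n) :
    (Finset.univ.powersetCard j).filter (fun s => p ∉ s)
      = (Finset.univ.erase p).powersetCard j := by
  classical
  ext s
  simp only [Finset.mem_filter, Finset.mem_powersetCard, Finset.subset_erase]
  tauto

lemma sig_split (j : ℕ) (p : Fin n) (κ : Fin n → ℝ) :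
    ∑ s ∈ Finset.univ.powersetCard (j + 1), ∏ i ∈ s, κ i
      = κ p * (∑ t ∈ (Finset.univ.erase p).powersetCard j, ∏ i ∈ t, κ i)
        + ∑ t ∈ (Finset.univ.erase p).powersetCard (j + 1), ∏ i ∈ t, κ i := by
  classical
  have h1 : ∀ s : Finset (Fin n), (∏ i ∈ s, κ i)
      = (if p ∈ s then ∏ i ∈ s, κ i else 0) + (if p ∈ s then 0 else ∏ i ∈ s, κ i) := by
    intro s; split_ifs <;> ring
  rw [Finset.sum_congr rfl (fun s _ => h1 s), Finset.sum_add_distrib]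
  congr 1
  · rw [sum_powersetCard_ite j p (fun s => ∏ i ∈ s, κ i), Finset.mul_sum]
    refine Finset.sum_congr rfl fun t ht => ?_
    have hpt : p ∉ t := fun h =>
      (Finset.mem_erase.mp ((Finset.mem_powersetCard.mp ht).1 h)).1 rfl
    rw [Finset.prod_insert hpt]
  · rw [Finset.sum_ite, Finset.sum_const_zero, zero_add, filter_not_mem_powersetCard]

lemma L_apply_succ (j : ℕ) (κ : Fin n → ℝ) (p : Fin n) :
    L n (j + 1) κ (Pi.single p 1)
      = ∑ t ∈ (Finset.univ.erase p).powersetCard j, ∏ i ∈ t, κ i := by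
  classical
  rw [L_apply, sum_powersetCard_ite j p (fun s => ∏ l ∈ s.erase p, κ l)]
  refine Finset.sum_congr rfl fun t ht => ?_
  have hpt : p ∉ t := fun h =>
    (Finset.mem_erase.mp ((Finset.mem_powersetCard.mp ht).1 h)).1 rfl
  rw [Finset.erase_insert hpt]

lemma L_apply_zero (κ : Fin n → ℝ) (p : Fin n) : L n 0 κ (Pi.single p 1) = 0 := by
  classical
  rw [L_apply]
  simp

lemma T_zero (p : Fin n) (κ : Fin n → ℝ) :
    ∑ t ∈ (Finset.univ.erase p).powersetCard 0, ∏ i ∈ t, κ i = 1 := by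
  simp

lemma esym_zero_eq_one (κ : Fin n → ℝ) : Esym n 0 κ = 1 := by
  simp [Esym]

end St6

end DerivMachinery

namespace St6
lemma final_pos (cB cC a b c t : ℝ) (hcB : 0 < cB) (hcC : 0 < cC)
    (hB : 0 < t * a + b) (hC : 0 < t * b + c) (hkey : 0 < b * b - c * a) :
    0 < cC⁻¹ * (t * b + c) * (-((cB⁻¹ * (t * a + b)) ^ 2)⁻¹ * (cB⁻¹ * a))
        + (cB⁻¹ * (t * a + b))⁻¹ * (cC⁻¹ * b) := by
  have hBne : t * a + b ≠ 0 := ne_of_gt hB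
  have h1 : cC⁻¹ * (t * b + c) * (-((cB⁻¹ * (t * a + b)) ^ 2)⁻¹ * (cB⁻¹ * a))
      + (cB⁻¹ * (t * a + b))⁻¹ * (cC⁻¹ * b)
      = (cB / cC) * ((b * b - c * a) / (t * a + b) ^ 2) := by
    field_simp
    ring
  rw [h1]
  exact mul_pos (div_pos hcB hcC) (div_pos hkey (pow_pos hB 2))


end St6

/-- `F = E_k/E_{k-1}` is strictly increasing on `Γ_k^+`:
`∂F/∂κ_p > 0` for every `p` and every `κ ∈ Γ_k^+`. -/
theorem statement6 (n k : ℕ) (hk1 : 1 ≤ k) (hkn : k ≤ n)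
    (κ : Fin n → ℝ) (hκ : κ ∈ GammaPlus n k) (p : Fin n) :
    0 < fderiv ℝ (Fquot n k) κ (Pi.single p 1) := by
  classical
  have hκ' : ∀ i : ℕ, 1 ≤ i → i ≤ k → 0 < Esym n i κ := hκ
  obtain ⟨K, rfl⟩ : ∃ K, k = K + 1 := ⟨k - 1, by omega⟩
  have hden : 0 < Esym n K κ := by
    rcases Nat.eq_zero_or_pos K with rfl | hK
    · rw [St6.esym_zero_eq_one]; norm_num
    · exact hκ' K hK (by omega)
  have hne : Esym n K κ ≠ 0 := ne_of_gt hden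
  have hKd := St6.hasFDerivAt_esym n K κ
  have hK1d := St6.hasFDerivAt_esym n (K + 1) κ
  have hinv : HasFDerivAt (fun y : Fin n → ℝ => (Esym n K y)⁻¹)
      ((-((Esym n K κ) ^ 2)⁻¹) • (((n.choose K : ℝ))⁻¹ • St6.L n K κ)) κ :=
    (hasDerivAt_inv hne).comp_hasFDerivAt κ hKd
  have hFq : HasFDerivAt (Fquot n (K + 1))
      (Esym n (K + 1) κ • ((-((Esym n K κ) ^ 2)⁻¹) • (((n.choose K : ℝ))⁻¹ • St6.L n K κ))
        + (Esym n K κ)⁻¹ • (((n.choose (K + 1) : ℝ))⁻¹ • St6.L n (K + 1) κ)) κ := by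
    have h := hK1d.mul hinv
    have hfun : Fquot n (K + 1) = fun y => Esym n (K + 1) y * (Esym n K y)⁻¹ := by
      funext y
      rw [Fquot, Nat.add_sub_cancel, div_eq_mul_inv]
    rw [hfun]
    exact h
  rw [hFq.fderiv]
  simp only [ContinuousLinearMap.add_apply, ContinuousLinearMap.smul_apply, smul_eq_mul]
  rcases K with _ | J
  · -- k = 1
    rw [St6.L_apply_zero, St6.L_apply_succ 0, St6.esym_zero_eq_one]
    have hn : 0 < n := by omega
    have hch : (0:ℝ) < (n.choose 1 : ℝ) := by
      exact_mod_cast Nat.choose_pos (by omega)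
    simp only [Finset.powersetCard_zero, Finset.sum_singleton, Finset.prod_empty]
    rw [mul_zero, mul_zero, mul_zero, zero_add]
    have := inv_pos.mpr hch
    simpa using this
  · -- k = K + 1 = J + 2
    rw [St6.L_apply_succ (J + 1), St6.L_apply_succ J]
    set a : ℝ := ∑ t ∈ (Finset.univ.erase p).powersetCard J, ∏ i ∈ t, κ i with ha
    set b : ℝ := ∑ t ∈ (Finset.univ.erase p).powersetCard (J + 1), ∏ i ∈ t, κ i with hb
    set c : ℝ := ∑ t ∈ (Finset.univ.erase p).powersetCard (J + 2), ∏ i ∈ t, κ i with hc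
    have hcB : (0:ℝ) < (n.choose (J + 1) : ℝ) := by
      exact_mod_cast Nat.choose_pos (by omega)
    have hcC : (0:ℝ) < (n.choose (J + 2) : ℝ) := by
      exact_mod_cast Nat.choose_pos (by omega)
    have eB : Esym n (J + 1) κ = ((n.choose (J + 1) : ℝ))⁻¹ * (κ p * a + b) := by
      rw [Esym, St6.sig_split J p κ]
    have eC : Esym n (J + 2) κ = ((n.choose (J + 2) : ℝ))⁻¹ * (κ p * b + c) := by
      rw [Esym, St6.sig_split (J + 1) p κ]
    have hB : 0 < κ p * a + b := by
      have h := hκ' (J + 1) (by omega) (by omega)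
      rw [eB] at h
      have h2 := mul_pos hcB h
      rwa [← mul_assoc, mul_inv_cancel₀ (ne_of_gt hcB), one_mul] at h2
    have hC : 0 < κ p * b + c := by
      have h := hκ' (J + 2) (by omega) (by omega)
      rw [eC] at h
      have h2 := mul_pos hcC h
      rwa [← mul_assoc, mul_inv_cancel₀ (ne_of_gt hcC), one_mul] at h2
    have hkey : 0 < b * b - c * a := by
      rcases lt_trichotomy (c * a) 0 with h | h | h
      · nlinarith [mul_self_nonneg b]
      · have hbne : b ≠ 0 := by
          rintro hb0
          rcases mul_eq_zero.mp h with hc0 | ha0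
          · rw [hb0, hc0] at hC; simp at hC
          · rw [hb0, ha0] at hB; simp at hB
        nlinarith [mul_self_pos.mpr hbne]
      · -- Newton case
        by_cases hJn : J + 3 ≤ n
        · obtain ⟨u, hu⟩ : ∃ u, n - 1 = J + 2 + u := ⟨n - 1 - (J + 2), by omega⟩
          set S : Multiset ℝ := ((Finset.univ.erase p).val.map κ) with hS
          have hScard : Multiset.card S = J + 2 + u := by
            rw [hS, Multiset.card_map]
            have : Multiset.card (Finset.univ.erase p).val = (Finset.univ.erase p).card := rfl
            rw [this, Finset.card_erase_of_mem (Finset.mem_univ p), Finset.card_univ,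
              Fintype.card_fin, hu]
          have hesymm : ∀ j : ℕ, S.esymm j
              = ∑ t ∈ (Finset.univ.erase p).powersetCard j, ∏ i ∈ t, κ i := fun j =>
            Finset.esymm_map_val κ _ j
          have hN := St6.newton_lt S J u hScard (by rw [hesymm, hesymm]; exact h)
          rw [hesymm, hesymm, hesymm] at hN
          nlinarith [hN]
        · have hc0 : c = 0 := by
            rw [hc]
            have hemp : (Finset.univ.erase p).powersetCard (J + 2) = ∅ := by
              apply Finset.powersetCard_eq_empty.mpr
              rw [Finset.card_erase_of_mem (Finset.mem_univ p), Finset.card_univ,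
                Fintype.card_fin]
              omega
            rw [hemp, Finset.sum_empty]
          rw [hc0, zero_mul] at h
          exact absurd h (lt_irrefl 0)
    rw [eB, eC]
    exact St6.final_pos _ _ a b c (κ p) hcB hcC hB hC hkey
end

section
/- The function F(κ) = E_k(κ)/E_{k-1}(κ) is concave on Γ_k^+, and it is inverse concave, i.e. the function F_*(κ_1,…,κ_n) = F(κ_1^{-1},…,κ_n^{-1})^{-1} is concave on the set where all κ_i > 0 and (κ_1^{-1},…,κ_n^{-1}) ∈ Γ_k^+. -/
set_option linter.unusedSectionVars false

open Finset Polynomial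

variable {ι : Type*} [DecidableEq ι]

/-- Elementary symmetric polynomial over a finset. -/
noncomputable def Ssym (A : Finset ι) (k : ℕ) (z : ι → ℝ) : ℝ :=
  ∑ s ∈ A.powersetCard k, ∏ i ∈ s, z i

lemma Ssym_zero (A : Finset ι) (z : ι → ℝ) : Ssym A 0 z = 1 := by
  simp [Ssym]

lemma Ssym_of_card_lt {A : Finset ι} {k : ℕ} (h : A.card < k) (z : ι → ℝ) :
    Ssym A k z = 0 := by
  rw [Ssym, Finset.powersetCard_eq_empty.2 h, Finset.sum_empty]

lemma Ssym_one (A : Finset ι) (z : ι → ℝ) : Ssym A 1 z = ∑ i ∈ A, z i := by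
  rw [Ssym, Finset.powersetCard_one, Finset.sum_map]
  simp

lemma Ssym_insert {a : ι} {A : Finset ι} (ha : a ∉ A) (k : ℕ) (z : ι → ℝ) :
    Ssym (insert a A) (k+1) z = Ssym A (k+1) z + z a * Ssym A k z := by
  rw [Ssym, Finset.powersetCard_succ_insert ha, Finset.sum_union, Finset.sum_image]
  · congr 1
    rw [Ssym, Finset.mul_sum]
    refine Finset.sum_congr rfl fun t ht => ?_
    rw [Finset.mem_powersetCard] at ht
    rw [Finset.prod_insert (fun hat => ha (ht.1 hat))]
  · intro t ht t' ht' htt'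
    rw [Finset.mem_coe, Finset.mem_powersetCard] at ht ht'
    have h1 : a ∉ t := fun hat => ha (ht.1 hat)
    have h2 : a ∉ t' := fun hat => ha (ht'.1 hat)
    rw [← Finset.erase_insert h1, ← Finset.erase_insert h2, htt']
  · rw [Finset.disjoint_right]
    intro t htim ht
    rw [Finset.mem_image] at htim
    obtain ⟨u, hu, rfl⟩ := htim
    rw [Finset.mem_powersetCard] at ht
    exact ha (ht.1 (Finset.mem_insert_self a u))

lemma Ssym_erase {i : ι} {A : Finset ι} (hi : i ∈ A) (k : ℕ) (z : ι → ℝ) :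
    Ssym A (k+1) z = Ssym (A.erase i) (k+1) z + z i * Ssym (A.erase i) k z := by
  conv_lhs => rw [← Finset.insert_erase hi]
  exact Ssym_insert (Finset.notMem_erase i A) k z

lemma Ssym_pos {A : Finset ι} {k : ℕ} (hk : k ≤ A.card) {z : ι → ℝ}
    (hz : ∀ i ∈ A, 0 < z i) : 0 < Ssym A k z := by
  refine Finset.sum_pos (fun s hs => ?_) (Finset.powersetCard_nonempty.2 hk)
  rw [Finset.mem_powersetCard] at hs
  exact Finset.prod_pos fun i hi => hz i (hs.1 hi)

lemma Ssym_smul (A : Finset ι) (k : ℕ) (z : ι → ℝ) (c : ℝ) :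
    Ssym A k (fun i => c * z i) = c ^ k * Ssym A k z := by
  rw [Ssym, Ssym, Finset.mul_sum]
  refine Finset.sum_congr rfl fun s hs => ?_
  rw [Finset.mem_powersetCard] at hs
  rw [Finset.prod_mul_distrib, Finset.prod_const, hs.2]

/-- twice the second symmetric function -/
lemma Ssym_two (A : Finset ι) (z : ι → ℝ) :
    2 * Ssym A 2 z = (∑ i ∈ A, z i) ^ 2 - ∑ i ∈ A, (z i) ^ 2 := by
  classical
  induction A using Finset.induction with
  | empty =>
    rw [Ssym_of_card_lt (by simp) z]
    simp
  | insert _ _ ha =>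
    rename_i a B ih
    have h2 : Ssym (insert a B) 2 z = Ssym B 2 z + z a * Ssym B 1 z := Ssym_insert ha 1 z
    rw [h2, Finset.sum_insert ha, Finset.sum_insert ha, Ssym_one]
    nlinarith [ih]

/-- The double-counting identity `(k+1) S_{k+1}(A) = ∑_{i∈A} z i * S_k(A\i)`. -/
lemma Ssym_deriv_identity (A : Finset ι) (k : ℕ) (z : ι → ℝ) :
    (k+1 : ℝ) * Ssym A (k+1) z = ∑ i ∈ A, z i * Ssym (A.erase i) k z := by
  classical
  induction A using Finset.induction generalizing k with
  | empty =>
    rw [Ssym_of_card_lt (by simp) z]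
    simp
  | insert _ _ ha =>
    rename_i a B ih
    rw [Finset.sum_insert ha, Finset.erase_insert ha]
    have herase : ∀ i ∈ B, (insert a B).erase i = insert a (B.erase i) := by
      intro i hiB
      rw [Finset.erase_insert_of_ne]
      rintro rfl; exact ha hiB
    cases k with
    | zero =>
      have hz : (∑ i ∈ B, z i * Ssym ((insert a B).erase i) 0 z) = ∑ i ∈ B, z i :=
        Finset.sum_congr rfl fun i hi => by rw [Ssym_zero]; ring
      rw [hz, Ssym_insert ha 0 z, Ssym_one, Ssym_zero]
      push_cast
      ring
    | succ m =>
      have hz : (∑ i ∈ B, z i * Ssym ((insert a B).erase i) (m+1) z)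
          = ∑ i ∈ B, (z i * Ssym (B.erase i) (m+1) z + z a * (z i * Ssym (B.erase i) m z)) :=
        Finset.sum_congr rfl fun i hi => by
          rw [herase i hi, Ssym_insert (fun h => ha (Finset.mem_of_mem_erase h)) m z]
          ring
      rw [hz, Finset.sum_add_distrib, ← Finset.mul_sum, ← ih, ← ih, Ssym_insert ha (m+1) z]
      push_cast
      ring


/-- complement / inversion identity -/
lemma Ssym_compl {A : Finset ι} {k : ℕ} (hk : k ≤ A.card) {z : ι → ℝ}
    (hz : ∀ i ∈ A, z i ≠ 0) :
    Ssym A k (fun i => (z i)⁻¹) = (∏ i ∈ A, z i)⁻¹ * Ssym A (A.card - k) z := by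
  rw [Ssym, Ssym, Finset.mul_sum]
  refine Finset.sum_nbij' (fun s => A \ s) (fun t => A \ t) ?_ ?_ ?_ ?_ ?_
  · intro s hs
    rw [Finset.mem_powersetCard] at hs ⊢
    exact ⟨Finset.sdiff_subset, by rw [Finset.card_sdiff_of_subset hs.1, hs.2]⟩
  · intro t ht
    rw [Finset.mem_powersetCard] at ht ⊢
    refine ⟨Finset.sdiff_subset, ?_⟩
    rw [Finset.card_sdiff_of_subset ht.1, ht.2]
    omega
  · intro s hs
    rw [Finset.mem_powersetCard] at hs
    exact Finset.sdiff_sdiff_eq_self hs.1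
  · intro t ht
    rw [Finset.mem_powersetCard] at ht
    exact Finset.sdiff_sdiff_eq_self ht.1
  · intro s hs
    rw [Finset.mem_powersetCard] at hs
    have hprod : (∏ i ∈ A \ s, z i) * ∏ i ∈ s, z i = ∏ i ∈ A, z i :=
      Finset.prod_sdiff hs.1
    have hs0 : (∏ i ∈ s, z i) ≠ 0 :=
      Finset.prod_ne_zero_iff.2 fun i hi => hz i (hs.1 hi)
    have hA0 : (∏ i ∈ A, z i) ≠ 0 := Finset.prod_ne_zero_iff.2 hz
    rw [Finset.prod_inv_distrib]
    field_simp
    linarith [hprod]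

/-- the polynomial with roots `-z i` -/
noncomputable def polS (A : Finset ι) (z : ι → ℝ) : ℝ[X] := ∏ i ∈ A, (X + C (z i))

lemma polS_monic (A : Finset ι) (z : ι → ℝ) : (polS A z).Monic :=
  monic_prod_of_monic _ _ fun i _ => monic_X_add_C (z i)

lemma polS_natDegree (A : Finset ι) (z : ι → ℝ) : (polS A z).natDegree = A.card := by
  rw [polS, Polynomial.natDegree_prod _ _ (fun i _ => (monic_X_add_C (z i)).ne_zero)]
  simp [Polynomial.natDegree_X_add_C]

lemma polS_coeff (A : Finset ι) (z : ι → ℝ) {m : ℕ} (hm : m ≤ A.card) :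
    (polS A z).coeff m = Ssym A (A.card - m) z :=
  Finset.prod_X_add_C_coeff A z hm

lemma polS_splits (A : Finset ι) (z : ι → ℝ) : Splits (polS A z) :=
  Splits.prod fun i _ => Splits.of_natDegree_le_one (by simp [Polynomial.natDegree_X_add_C])

lemma polS_card_roots (A : Finset ι) (z : ι → ℝ) :
    Multiset.card (polS A z).roots = A.card := by
  rw [Polynomial.splits_iff_card_roots.1 (polS_splits A z), polS_natDegree]

/-- natDegree of iterated derivative over ℝ -/
lemma natDegree_iterate_derivative_real (p : ℝ[X]) (m : ℕ) (hm : m ≤ p.natDegree)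
    (hp : p ≠ 0) :
    (derivative^[m] p).natDegree = p.natDegree - m ∧ derivative^[m] p ≠ 0 := by
  have hne : (derivative^[m] p).coeff (p.natDegree - m) ≠ 0 := by
    rw [Polynomial.coeff_iterate_derivative]
    have harith : p.natDegree - m + m = p.natDegree := by omega
    rw [harith]
    have h1 : p.coeff p.natDegree ≠ 0 := by
      rw [← Polynomial.leadingCoeff]
      exact Polynomial.leadingCoeff_ne_zero.2 hp
    have h2 : (p.natDegree.descFactorial m) ≠ 0 := by
      intro h
      rw [Nat.descFactorial_eq_zero_iff_lt] at h
      omega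
    rw [nsmul_eq_mul]
    exact mul_ne_zero (Nat.cast_ne_zero.2 h2) h1
  constructor
  · refine le_antisymm ?_ (Polynomial.le_natDegree_of_ne_zero hne)
    refine Polynomial.natDegree_le_iff_coeff_eq_zero.2 fun j hj => ?_
    rw [Polynomial.coeff_iterate_derivative,
      Polynomial.coeff_eq_zero_of_natDegree_lt (by omega), smul_zero]
  · intro h0
    rw [h0] at hne
    simp at hne

lemma card_roots_iterate_derivative (p : ℝ[X]) (m : ℕ) :
    Multiset.card p.roots ≤ Multiset.card (derivative^[m] p).roots + m := by
  induction m with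
  | zero => simp
  | succ j ih =>
    calc Multiset.card p.roots ≤ Multiset.card (derivative^[j] p).roots + j := ih
    _ ≤ (Multiset.card (derivative (derivative^[j] p)).roots + 1) + j := by
        exact add_le_add_left (Polynomial.card_roots_le_derivative _) j
    _ = Multiset.card (derivative^[j+1] p).roots + (j+1) := by
        rw [Function.iterate_succ_apply']
        omega

/-- iterated derivative of a real-rooted polynomial is real-rooted -/
lemma realrooted_iterate (p : ℝ[X]) (hp : p ≠ 0)
    (hroots : Multiset.card p.roots = p.natDegree) (m : ℕ) (hm : m ≤ p.natDegree) :
    Multiset.card (derivative^[m] p).roots = p.natDegree - m ∧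
      (derivative^[m] p).natDegree = p.natDegree - m ∧ derivative^[m] p ≠ 0 := by
  obtain ⟨hdeg, hne⟩ := natDegree_iterate_derivative_real p m hm hp
  have hle : Multiset.card (derivative^[m] p).roots ≤ p.natDegree - m := by
    calc Multiset.card (derivative^[m] p).roots ≤ (derivative^[m] p).natDegree :=
      Polynomial.card_roots' _
    _ = p.natDegree - m := hdeg
  have hge := card_roots_iterate_derivative p m
  exact ⟨by omega, hdeg, hne⟩

lemma Ssym_keyfin {A : Finset ι} (hA : 2 ≤ A.card) {a : ι → ℝ}
    (h0 : Ssym A (A.card - 1) a = 0) :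
    Ssym A A.card a * Ssym A (A.card - 2) a ≤ 0 := by
  by_cases hz : ∃ i ∈ A, a i = 0
  · obtain ⟨i, hi, hai⟩ := hz
    have h : Ssym A A.card a = 0 := by
      rw [Ssym, Finset.powersetCard_self, Finset.sum_singleton]
      exact Finset.prod_eq_zero hi hai
    rw [h, zero_mul]
  · push_neg at hz
    set P := ∏ i ∈ A, a i with hP
    have hPne : P ≠ 0 := Finset.prod_ne_zero_iff.2 hz
    have h1 : Ssym A 1 (fun i => (a i)⁻¹) = P⁻¹ * Ssym A (A.card - 1) a :=
      Ssym_compl (by omega) hz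
    have h2 : Ssym A 2 (fun i => (a i)⁻¹) = P⁻¹ * Ssym A (A.card - 2) a :=
      Ssym_compl (by omega) hz
    have h0' : Ssym A 0 (fun i => (a i)⁻¹) = P⁻¹ * Ssym A (A.card - 0) a :=
      Ssym_compl (by omega) hz
    rw [Ssym_zero, Nat.sub_zero] at h0'
    have hSd : Ssym A A.card a = P := by
      field_simp at h0'
      linarith
    have hS1 : Ssym A 1 (fun i => (a i)⁻¹) = 0 := by rw [h1, h0, mul_zero]
    have hsum : ∑ i ∈ A, (a i)⁻¹ = 0 := by
      rw [← hS1, Ssym_one]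
    have ht := Ssym_two A (fun i => (a i)⁻¹)
    rw [hsum] at ht
    have hS2 : Ssym A 2 (fun i => (a i)⁻¹) ≤ 0 := by
      nlinarith [Finset.sum_nonneg (fun i (_ : i ∈ A) => sq_nonneg ((a i)⁻¹))]
    have hSd2 : Ssym A (A.card - 2) a = P * Ssym A 2 (fun i => (a i)⁻¹) := by
      rw [h2, ← mul_assoc, mul_inv_cancel₀ hPne, one_mul]
    rw [hSd, hSd2]
    nlinarith [mul_nonneg (sq_nonneg P) (neg_nonneg.2 hS2)]

lemma multiset_esymm_eq (v : Multiset ℝ) (j : ℕ) :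
    v.esymm j = Ssym (univ : Finset (Fin v.toList.length)) j v.toList.get := by
  have hv : (Multiset.map v.toList.get (univ : Finset (Fin v.toList.length)).val) = v := by
    have h1 : ((univ : Finset (Fin v.toList.length)).val)
        = ↑(List.finRange v.toList.length) := by rw [Fin.univ_def]
    rw [h1, Multiset.map_coe, List.map_get_finRange, Multiset.coe_toList]
  conv_lhs => rw [← hv]
  rw [Finset.esymm_map_val]
  rfl

lemma multiset_key (v : Multiset ℝ) (hv : 2 ≤ Multiset.card v)
    (h0 : v.esymm (Multiset.card v - 1) = 0) :
    v.esymm (Multiset.card v) * v.esymm (Multiset.card v - 2) ≤ 0 := by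
  have hlen : v.toList.length = Multiset.card v := Multiset.length_toList v
  have hA : (univ : Finset (Fin v.toList.length)).card = Multiset.card v := by
    rw [Finset.card_univ, Fintype.card_fin, hlen]
  rw [multiset_esymm_eq v _, multiset_esymm_eq v _, ← hA]
  refine Ssym_keyfin (by omega) ?_
  rw [hA, ← multiset_esymm_eq]
  exact h0
lemma newton_special {B : Finset ι} {k : ℕ} (z : ι → ℝ) (hk2 : 2 ≤ k) (hkB : k ≤ B.card)
    (h0 : Ssym B (k-1) z = 0) (hSk : 0 < Ssym B k z) (hSk2 : 0 < Ssym B (k-2) z) :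
    False := by
  have hpne : polS B z ≠ 0 := (polS_monic B z).ne_zero
  have hprr : Multiset.card (polS B z).roots = (polS B z).natDegree := by
    rw [polS_card_roots, polS_natDegree]
  obtain ⟨hqroots, hqdeg, hqne⟩ := realrooted_iterate (polS B z) hpne hprr (B.card - k)
    (by rw [polS_natDegree]; omega)
  set q := derivative^[B.card - k] (polS B z) with hq
  rw [polS_natDegree] at hqroots hqdeg
  have hNk : B.card - (B.card - k) = k := by omega
  rw [hNk] at hqroots hqdeg
  -- coefficients of q
  have hcoeff : ∀ j, j ≤ k →
      q.coeff j = ((j + (B.card - k)).descFactorial (B.card - k) : ℝ) * Ssym B (k - j) z := by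
    intro j hj
    have harith : B.card - (j + (B.card - k)) = k - j := by omega
    rw [hq, Polynomial.coeff_iterate_derivative,
      polS_coeff B z (by omega : j + (B.card - k) ≤ B.card), harith, nsmul_eq_mul]
  have hdesc : ∀ j : ℕ, (0:ℝ) < ((j + (B.card - k)).descFactorial (B.card - k) : ℝ) := by
    intro j
    have : (j + (B.card - k)).descFactorial (B.card - k) ≠ 0 := by
      intro h
      rw [Nat.descFactorial_eq_zero_iff_lt] at h
      omega
    positivity
  -- roots
  have hsplits : Splits q := Polynomial.splits_iff_card_roots.2 (by omega)
  have hfact := hsplits.eq_prod_roots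
  have hmapeq : (Multiset.map (fun a => X - C a) q.roots)
      = Multiset.map (fun a => X + C (-a)) q.roots := by
    refine Multiset.map_congr rfl fun a _ => ?_
    rw [map_neg, ← sub_eq_add_neg]
  set v : Multiset ℝ := q.roots.map (fun r => -r) with hv
  have hvcard : Multiset.card v = k := by rw [hv, Multiset.card_map]; omega
  have hcoeff2 : ∀ j, j ≤ k → q.coeff j = q.leadingCoeff * v.esymm (k - j) := by
    intro j hj
    conv_lhs => rw [hfact]
    rw [hmapeq, Polynomial.coeff_C_mul]
    have h := Multiset.prod_X_add_C_coeff' q.roots (fun r => -r) (k := j) (by omega)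
    rw [hqroots] at h
    rw [h, ← hv]
  have hlc : q.leadingCoeff ≠ 0 := Polynomial.leadingCoeff_ne_zero.2 hqne
  -- esymm v (k-1) = 0
  have he1 : v.esymm (k - 1) = 0 := by
    have e1 := hcoeff 1 (by omega)
    have e2 := hcoeff2 1 (by omega)
    rw [h0, mul_zero] at e1
    rw [e1] at e2
    rcases mul_eq_zero.1 e2.symm with h | h
    · exact absurd h hlc
    · exact h
  have hkey := multiset_key v (by omega) (by rw [hvcard]; exact he1)
  rw [hvcard] at hkey
  -- contradiction
  have h00 := hcoeff 0 (by omega)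
  have h00' := hcoeff2 0 (by omega)
  rw [Nat.sub_zero] at h00 h00'
  have e0 : q.leadingCoeff * v.esymm k = ((0 + (B.card - k)).descFactorial (B.card - k) : ℝ) * Ssym B k z := by
    rw [← h00', h00]
  have e2 : q.leadingCoeff * v.esymm (k-2) = ((2 + (B.card - k)).descFactorial (B.card - k) : ℝ) * Ssym B (k-2) z := by
    rw [← hcoeff2 2 (by omega), hcoeff 2 (by omega)]
  have hpos0 : 0 < q.leadingCoeff * v.esymm k := by
    rw [e0]
    exact mul_pos (hdesc 0) hSk
  have hpos2 : 0 < q.leadingCoeff * v.esymm (k-2) := by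
    rw [e2]
    exact mul_pos (hdesc 2) hSk2
  nlinarith [mul_pos hpos0 hpos2, sq_nonneg q.leadingCoeff]
/-- number of `j`-subsets of `A` containing a given `u ⊆ A` with `#u ≤ j` -/
lemma count_supersets {A u : Finset ι} (hu : u ⊆ A) {j : ℕ} (huj : u.card ≤ j) :
    ((A.powersetCard j).filter (fun t => u ⊆ t)).card
      = (A.card - u.card).choose (j - u.card) := by
  rw [← Finset.card_sdiff_of_subset hu, ← Finset.card_powersetCard (j - u.card) (A \ u)]
  refine Finset.card_bij' (fun t _ => t \ u) (fun w _ => w ∪ u) ?_ ?_ ?_ ?_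
  · intro t ht
    rw [Finset.mem_filter, Finset.mem_powersetCard] at ht
    rw [Finset.mem_powersetCard]
    exact ⟨Finset.sdiff_subset_sdiff ht.1.1 (le_refl u),
      by rw [Finset.card_sdiff_of_subset ht.2, ht.1.2]⟩
  · intro w hw
    rw [Finset.mem_powersetCard] at hw
    have hdisj : Disjoint w u := by
      have := hw.1
      intro v hv1 hv2
      intro x hx
      have hxw := hv1 hx
      have hxu := hv2 hx
      have := this hxw
      rw [Finset.mem_sdiff] at this
      exact absurd hxu this.2
    rw [Finset.mem_filter, Finset.mem_powersetCard]
    refine ⟨⟨Finset.union_subset (hw.1.trans Finset.sdiff_subset) hu, ?_⟩,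
      Finset.subset_union_right⟩
    rw [Finset.card_union_of_disjoint hdisj, hw.2]
    omega
  · intro t ht
    rw [Finset.mem_filter] at ht
    exact Finset.sdiff_union_of_subset ht.2
  · intro w hw
    rw [Finset.mem_powersetCard] at hw
    have hdisj : Disjoint w u := by
      intro v hv1 hv2 x hx
      have := hw.1 (hv1 hx)
      rw [Finset.mem_sdiff] at this
      exact absurd (hv2 hx) this.2
    show (w ∪ u) \ u = w
    rw [Finset.union_sdiff_right, Finset.sdiff_eq_self_iff_disjoint.2 hdisj]

lemma count_supersets_zero {A u : Finset ι} {j : ℕ} (huj : j < u.card) :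
    ((A.powersetCard j).filter (fun t => u ⊆ t)) = ∅ := by
  rw [Finset.filter_eq_empty_iff]
  intro t ht hut
  rw [Finset.mem_powersetCard] at ht
  have := Finset.card_le_card hut
  omega

/-- expansion of elementary symmetric functions under a uniform shift -/
lemma Ssym_shift (A : Finset ι) {j : ℕ} (hj : j ≤ A.card) (z : ι → ℝ) (s : ℝ) :
    Ssym A j (fun i => z i + s)
      = ∑ m ∈ Finset.range (j+1),
          ((A.card - m).choose (j - m) : ℝ) * s^(j-m) * Ssym A m z := by
  classical
  have step1 : Ssym A j (fun i => z i + s)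
      = ∑ t ∈ A.powersetCard j, ∑ u ∈ t.powerset, (∏ i ∈ u, z i) * s^(j - u.card) := by
    rw [Ssym]
    refine Finset.sum_congr rfl fun t ht => ?_
    rw [Finset.mem_powersetCard] at ht
    rw [Finset.prod_add]
    refine Finset.sum_congr rfl fun u hu => ?_
    rw [Finset.mem_powerset] at hu
    rw [Finset.prod_const, Finset.card_sdiff_of_subset hu, ht.2]
  have step2 : ∑ t ∈ A.powersetCard j, ∑ u ∈ t.powerset, (∏ i ∈ u, z i) * s^(j - u.card)
      = ∑ u ∈ A.powerset, ∑ t ∈ (A.powersetCard j).filter (fun t => u ⊆ t),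
          (∏ i ∈ u, z i) * s^(j - u.card) := by
    refine Finset.sum_comm' ?_
    intro t u
    simp only [Finset.mem_powersetCard, Finset.mem_powerset, Finset.mem_filter]
    constructor
    · rintro ⟨⟨h1, h2⟩, h3⟩
      exact ⟨⟨⟨h1, h2⟩, h3⟩, h3.trans h1⟩
    · rintro ⟨⟨⟨h1, h2⟩, h3⟩, _⟩
      exact ⟨⟨h1, h2⟩, h3⟩
  have step3 : ∀ u ∈ A.powerset,
      (∑ t ∈ (A.powersetCard j).filter (fun t => u ⊆ t), (∏ i ∈ u, z i) * s^(j - u.card))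
      = (((A.powersetCard j).filter (fun t => u ⊆ t)).card : ℝ)
          * ((∏ i ∈ u, z i) * s^(j - u.card)) := by
    intro u _
    rw [Finset.sum_const, nsmul_eq_mul]
  rw [step1, step2, Finset.sum_congr rfl step3, Finset.sum_powerset]
  have step4 : ∀ m ∈ Finset.range (A.card + 1),
      (∑ u ∈ A.powersetCard m,
        (((A.powersetCard j).filter (fun t => u ⊆ t)).card : ℝ)
          * ((∏ i ∈ u, z i) * s^(j - u.card)))
      = (if m ≤ j then ((A.card - m).choose (j - m) : ℝ) * s^(j-m) * Ssym A m z else 0) := by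
    intro m _
    by_cases hmj : m ≤ j
    · rw [if_pos hmj, Ssym, Finset.mul_sum]
      refine Finset.sum_congr rfl fun u hu => ?_
      rw [Finset.mem_powersetCard] at hu
      rw [count_supersets hu.1 (by omega), hu.2]
      ring
    · rw [if_neg hmj]
      refine Finset.sum_eq_zero fun u hu => ?_
      rw [Finset.mem_powersetCard] at hu
      rw [count_supersets_zero (by omega), Finset.card_empty]
      norm_num
  rw [Finset.sum_congr rfl step4]
  rw [← Finset.sum_subset (Finset.range_subset_range.2 (by omega : j + 1 ≤ A.card + 1))
    (fun m _ hm2 => if_neg (by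
      simp only [Finset.mem_range, not_lt] at hm2
      omega))]
  refine Finset.sum_congr rfl fun m hm => ?_
  rw [Finset.mem_range] at hm
  rw [if_pos (by omega)]
def GammaS (A : Finset ι) (k : ℕ) (z : ι → ℝ) : Prop :=
  ∀ j, 1 ≤ j → j ≤ k → 0 < Ssym A j z

lemma GammaS.mono {A : Finset ι} {k k' : ℕ} {z : ι → ℝ} (h : GammaS A k z) (hk : k' ≤ k) :
    GammaS A k' z := fun j h1 h2 => h j h1 (h2.trans hk)

lemma GammaS.shift {A : Finset ι} {k : ℕ} {z : ι → ℝ} (h : GammaS A k z)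
    (hk : k ≤ A.card) {s : ℝ} (hs : 0 ≤ s) : GammaS A k (fun i => z i + s) := by
  intro j h1 h2
  rw [Ssym_shift A (h2.trans hk) z s]
  have hterm : ∀ m ∈ Finset.range (j+1),
      0 ≤ ((A.card - m).choose (j - m) : ℝ) * s^(j-m) * Ssym A m z := by
    intro m hm
    rw [Finset.mem_range] at hm
    have hS : 0 ≤ Ssym A m z := by
      rcases Nat.eq_zero_or_pos m with rfl | hm0
      · rw [Ssym_zero]; norm_num
      · exact le_of_lt (h m hm0 (by omega))
    exact mul_nonneg (mul_nonneg (Nat.cast_nonneg _) (pow_nonneg hs _)) hS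
  have hjmem : j ∈ Finset.range (j+1) := by simp
  have hjval : ((A.card - j).choose (j - j) : ℝ) * s^(j-j) * Ssym A j z = Ssym A j z := by
    simp
  calc (0:ℝ) < Ssym A j z := h j h1 h2
  _ = _ := hjval.symm
  _ ≤ _ := Finset.single_le_sum hterm hjmem

lemma GammaS.all_pos {A : Finset ι} {z : ι → ℝ} (h : GammaS A A.card z) :
    ∀ i ∈ A, 0 < z i := by
  intro i hi
  by_contra hz
  push_neg at hz
  have heval : Polynomial.eval (-(z i)) (polS A z) = 0 := by
    rw [polS, Polynomial.eval_prod]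
    refine Finset.prod_eq_zero hi ?_
    simp
  have hA : 0 < A.card := Finset.card_pos.2 ⟨i, hi⟩
  have hpos : 0 < Polynomial.eval (-(z i)) (polS A z) := by
    rw [Polynomial.eval_eq_sum_range, polS_natDegree]
    have hx : (0:ℝ) ≤ -(z i) := by linarith
    refine Finset.sum_pos' ?_ ⟨0, by simp, ?_⟩
    · intro m hm
      rw [Finset.mem_range] at hm
      rw [polS_coeff A z (by omega)]
      have hS : 0 ≤ Ssym A (A.card - m) z := by
        rcases Nat.eq_zero_or_pos (A.card - m) with he | hp
        · rw [he, Ssym_zero]; norm_num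
        · exact le_of_lt (h _ hp (by omega))
      exact mul_nonneg hS (pow_nonneg hx m)
    · rw [polS_coeff A z (by omega), Nat.sub_zero, pow_zero, mul_one]
      exact h A.card hA (le_refl _)
  rw [heval] at hpos
  exact lt_irrefl 0 hpos

/-- Key Lemma: on `Γ_k`, the symmetric functions of the reduced tuples are positive. -/
lemma gammaS_erase : ∀ (k : ℕ), 1 ≤ k → ∀ (A : Finset ι) (z : ι → ℝ), k ≤ A.card →
    GammaS A k z → ∀ i ∈ A, ∀ j, j ≤ k - 1 → 0 < Ssym (A.erase i) j z := by
  intro k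
  induction k with
  | zero => omega
  | succ k ih =>
    intro _ A z hcard h i hi j hj
    rcases Nat.eq_zero_or_pos k with rfl | hk1
    · have hj0 : j = 0 := by omega
      rw [hj0, Ssym_zero]
      norm_num
    rcases Nat.lt_or_ge j k with hjk | hjk
    · exact ih hk1 A z (by omega) (h.mono (by omega)) i hi j (by omega)
    have hjeq : k = j := by omega
    subst hjeq
    rcases Nat.eq_or_lt_of_le hcard with hc | hc
    · have hpos := GammaS.all_pos (A := A) (z := z) (by rw [← hc]; exact h)
      refine Ssym_pos ?_ (fun l hl => hpos l (Finset.mem_of_mem_erase hl))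
      rw [Finset.card_erase_of_mem hi]
      omega
    by_contra hle
    push_neg at hle
    have hcardE : (A.erase i).card = A.card - 1 := Finset.card_erase_of_mem hi
    have hkE : k ≤ (A.erase i).card := by omega
    set f : ℝ → ℝ := fun s => Ssym (A.erase i) k (fun l => z l + s) with hf
    have hcont : Continuous f := by
      rw [hf]
      simp only [Ssym]
      exact continuous_finset_sum _ (fun t _ =>
        continuous_finset_prod _ (fun l _ => by continuity))
    have hf0 : f 0 ≤ 0 := by
      simp only [hf, add_zero]
      exact hle
    obtain ⟨s0, hs0ge, hfs0⟩ : ∃ s0 : ℝ, 1 ≤ s0 ∧ 0 < f s0 := by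
      refine ⟨1 + |Ssym (A.erase i) k z|, by linarith [abs_nonneg (Ssym (A.erase i) k z)], ?_⟩
      set s0 : ℝ := 1 + |Ssym (A.erase i) k z| with hs0def
      have hs0 : 1 ≤ s0 := by
        rw [hs0def]
        have := abs_nonneg (Ssym (A.erase i) k z)
        linarith
      simp only [hf]
      rw [Ssym_shift (A.erase i) hkE z s0]
      rw [Finset.sum_range_succ]
      have hlast : (((A.erase i).card - k).choose (k - k) : ℝ) * s0^(k-k) * Ssym (A.erase i) k z
          = Ssym (A.erase i) k z := by
        simp
      rw [hlast]
      have hterm : ∀ m ∈ Finset.range k,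
          0 ≤ (((A.erase i).card - m).choose (k - m) : ℝ) * s0^(k-m) * Ssym (A.erase i) m z := by
        intro m hm
        rw [Finset.mem_range] at hm
        have hS : 0 ≤ Ssym (A.erase i) m z := by
          rcases Nat.eq_zero_or_pos m with rfl | hm0
          · rw [Ssym_zero]; norm_num
          · exact le_of_lt (ih hk1 A z (by omega) (h.mono (by omega)) i hi m (by omega))
        have hsp : (0:ℝ) ≤ s0 := by linarith
        exact mul_nonneg (mul_nonneg (Nat.cast_nonneg _) (pow_nonneg hsp _)) hS
      have hg0 : s0 ≤ (((A.erase i).card - 0).choose (k - 0) : ℝ) * s0^(k-0) * Ssym (A.erase i) 0 z := by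
        rw [Nat.sub_zero, Nat.sub_zero, Ssym_zero, mul_one]
        have h1 : (1:ℝ) ≤ (((A.erase i).card).choose k : ℝ) := by
          exact_mod_cast Nat.one_le_iff_ne_zero.2 (Nat.choose_pos hkE).ne'
        have h2 : s0 ≤ s0 ^ k := le_self_pow₀ hs0 (by omega)
        nlinarith
      have hsumlow : s0 ≤ ∑ m ∈ Finset.range k,
          (((A.erase i).card - m).choose (k - m) : ℝ) * s0^(k-m) * Ssym (A.erase i) m z :=
        le_trans hg0 (Finset.single_le_sum hterm (by simp [hk1]))
      have habs : -(Ssym (A.erase i) k z) ≤ |Ssym (A.erase i) k z| := neg_le_abs _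
      rw [hs0def] at hsumlow
      linarith
    have hivt := intermediate_value_Icc (by linarith : (0:ℝ) ≤ s0) hcont.continuousOn
    have h0mem : (0:ℝ) ∈ Set.Icc (f 0) (f s0) := ⟨hf0, le_of_lt hfs0⟩
    obtain ⟨sstar, hsmem, hfs⟩ := hivt h0mem
    obtain ⟨hs1, _⟩ := hsmem
    have hGw : GammaS A (k+1) (fun l => z l + sstar) := h.shift (by omega) hs1
    have hSk0 : Ssym (A.erase i) k (fun l => z l + sstar) = 0 := hfs
    have hSk1 : 0 < Ssym (A.erase i) (k+1) (fun l => z l + sstar) := by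
      have he := Ssym_erase hi k (fun l => z l + sstar)
      have hA1 : 0 < Ssym A (k+1) (fun l => z l + sstar) := hGw (k+1) (by omega) (le_refl _)
      rw [hSk0, mul_zero, add_zero] at he
      rw [← he]
      exact hA1
    have hSkm1 : 0 < Ssym (A.erase i) (k-1) (fun l => z l + sstar) := by
      rcases Nat.eq_or_lt_of_le hk1 with h1 | h1
      · have : k - 1 = 0 := by omega
        rw [this, Ssym_zero]; norm_num
      · exact ih hk1 A (fun l => z l + sstar) (by omega) (hGw.mono (by omega)) i hi (k-1) (by omega)
    have harith1 : k + 1 - 1 = k := by omega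
    have harith2 : k + 1 - 2 = k - 1 := by omega
    exact newton_special (B := A.erase i) (k := k+1) (fun l => z l + sstar) (by omega) (by omega)
      (by rw [harith1]; exact hSk0) hSk1 (by rw [harith2]; exact hSkm1)
lemma milne {a1 a2 b1 b2 : ℝ} (hb1 : 0 < b1) (hb2 : 0 < b2)
    (hd1 : 0 < a1 + b1) (hd2 : 0 < a2 + b2) :
    a1*b1/(a1+b1) + a2*b2/(a2+b2) ≤ (a1+a2)*(b1+b2)/(a1+a2+(b1+b2)) := by
  have hD : (0:ℝ) < a1+a2+(b1+b2) := by linarith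
  rw [div_add_div _ _ (ne_of_gt hd1) (ne_of_gt hd2), div_le_div_iff₀ (by positivity) hD]
  nlinarith [sq_nonneg (b1*a2 - b2*a1), mul_pos hd1 hd2]

lemma phimono {a b b' : ℝ} (hd : 0 < a + b) (hbb : b ≤ b') :
    a*b/(a+b) ≤ a*b'/(a+b') := by
  have hd' : 0 < a + b' := by linarith
  rw [div_le_div_iff₀ hd hd']
  nlinarith [sq_nonneg a]

lemma phi_superadd {a1 a2 b1 b2 B : ℝ} (hb1 : 0 < b1) (hb2 : 0 < b2)
    (hd1 : 0 < a1 + b1) (hd2 : 0 < a2 + b2) (hB : b1 + b2 ≤ B) :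
    a1*b1/(a1+b1) + a2*b2/(a2+b2) ≤ (a1+a2)*B/(a1+a2+B) :=
  (milne hb1 hb2 hd1 hd2).trans (phimono (by linarith) hB)

lemma t_eq_phi {a E F P : ℝ} (hF : 0 < F) (hP0 : 0 < P) (hP : P = E + a * F) :
    a * E / P = a * (E/F) / (a + E/F) := by
  have h1 : a + E/F = P/F := by
    rw [hP]
    field_simp
    ring
  rw [h1, div_div_eq_mul_div]
  congr 1
  field_simp

lemma a_add_div_pos {a E F P : ℝ} (hF : 0 < F) (hP0 : 0 < P) (hP : P = E + a * F) :
    0 < a + E/F := by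
  have h1 : a + E/F = P/F := by
    rw [hP]
    field_simp
    ring
  rw [h1]
  positivity

/-- Main superadditivity theorem (Marcus–Lopes on the Gårding cone). -/
lemma main_superadd : ∀ (k : ℕ), 1 ≤ k → ∀ (A : Finset ι) (z w : ι → ℝ), k ≤ A.card →
    GammaS A k z → GammaS A k w →
    GammaS A k (fun i => z i + w i) ∧
    Ssym A k z / Ssym A (k-1) z + Ssym A k w / Ssym A (k-1) w
      ≤ Ssym A k (fun i => z i + w i) / Ssym A (k-1) (fun i => z i + w i) := by
  intro k
  induction k with
  | zero => omega
  | succ k ih =>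
    intro _ A z w hcard hz hw
    simp only [Nat.add_sub_cancel]
    rcases Nat.eq_zero_or_pos k with rfl | hk1
    · -- base: k+1 = 1
      have hz1 : 0 < ∑ i ∈ A, z i := by
        have := hz 1 le_rfl le_rfl
        rwa [Ssym_one] at this
      have hw1 : 0 < ∑ i ∈ A, w i := by
        have := hw 1 le_rfl le_rfl
        rwa [Ssym_one] at this
      constructor
      · intro j h1 h2
        have hj1 : j = 1 := by omega
        subst hj1
        rw [Ssym_one, Finset.sum_add_distrib]
        exact add_pos hz1 hw1
      · rw [Ssym_zero, Ssym_zero, Ssym_zero, div_one, div_one, div_one,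
          Ssym_one, Ssym_one, Ssym_one, Finset.sum_add_distrib]
    · -- inductive step, 1 ≤ k
      have hzk := hz.mono (Nat.le_succ k)
      have hwk := hw.mono (Nat.le_succ k)
      obtain ⟨hGk, _⟩ := ih hk1 A z w (by omega) hzk hwk
      have hSkz : 0 < Ssym A k z := hzk k hk1 le_rfl
      have hSkw : 0 < Ssym A k w := hwk k hk1 le_rfl
      have hSkzw : 0 < Ssym A k (fun i => z i + w i) := hGk k hk1 le_rfl
      have hLz := gammaS_erase (k+1) (by omega) A z hcard hz
      have hLw := gammaS_erase (k+1) (by omega) A w hcard hw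
      simp only [Nat.add_sub_cancel] at hLz hLw
      have hIH : ∀ i ∈ A,
          GammaS (A.erase i) k (fun l => z l + w l) ∧
          Ssym (A.erase i) k z / Ssym (A.erase i) (k-1) z
            + Ssym (A.erase i) k w / Ssym (A.erase i) (k-1) w
            ≤ Ssym (A.erase i) k (fun l => z l + w l) / Ssym (A.erase i) (k-1) (fun l => z l + w l) := by
        intro i hi
        refine ih hk1 (A.erase i) z w ?_ ?_ ?_
        · rw [Finset.card_erase_of_mem hi]; omega
        · exact fun j h1 h2 => hLz i hi j (by omega)
        · exact fun j h1 h2 => hLw i hi j (by omega)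
      -- per-i inequality
      have hper : ∀ i ∈ A,
          z i * Ssym (A.erase i) k z / Ssym A k z
            + w i * Ssym (A.erase i) k w / Ssym A k w
          ≤ (z i + w i) * Ssym (A.erase i) k (fun l => z l + w l)
              / Ssym A k (fun l => z l + w l) := by
        intro i hi
        obtain ⟨hGke, hQineq⟩ := hIH i hi
        have hEz : 0 < Ssym (A.erase i) k z := hLz i hi k le_rfl
        have hEw : 0 < Ssym (A.erase i) k w := hLw i hi k le_rfl
        have hEzw : 0 < Ssym (A.erase i) k (fun l => z l + w l) := hGke k hk1 le_rfl
        have hFz : 0 < Ssym (A.erase i) (k-1) z := by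
          rcases Nat.eq_zero_or_pos (k-1) with he | hp
          · rw [he, Ssym_zero]; norm_num
          · exact hLz i hi (k-1) (by omega)
        have hFw : 0 < Ssym (A.erase i) (k-1) w := by
          rcases Nat.eq_zero_or_pos (k-1) with he | hp
          · rw [he, Ssym_zero]; norm_num
          · exact hLw i hi (k-1) (by omega)
        have hFzw : 0 < Ssym (A.erase i) (k-1) (fun l => z l + w l) := by
          rcases Nat.eq_zero_or_pos (k-1) with he | hp
          · rw [he, Ssym_zero]; norm_num
          · exact hGke (k-1) hp (by omega)
        have hPzeq : Ssym A k z = Ssym (A.erase i) k z + z i * Ssym (A.erase i) (k-1) z := by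
          have h := Ssym_erase hi (k-1) z
          rwa [show k - 1 + 1 = k from by omega] at h
        have hPweq : Ssym A k w = Ssym (A.erase i) k w + w i * Ssym (A.erase i) (k-1) w := by
          have h := Ssym_erase hi (k-1) w
          rwa [show k - 1 + 1 = k from by omega] at h
        have hPzweq : Ssym A k (fun l => z l + w l)
            = Ssym (A.erase i) k (fun l => z l + w l)
              + (z i + w i) * Ssym (A.erase i) (k-1) (fun l => z l + w l) := by
          have h := Ssym_erase hi (k-1) (fun l => z l + w l)
          rw [show k - 1 + 1 = k from by omega] at h
          simpa using h
        rw [t_eq_phi hFz hSkz hPzeq, t_eq_phi hFw hSkw hPweq, t_eq_phi hFzw hSkzw hPzweq]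
        exact phi_superadd (div_pos hEz hFz) (div_pos hEw hFw)
          (a_add_div_pos hFz hSkz hPzeq) (a_add_div_pos hFw hSkw hPweq) hQineq
      -- sum up
      have hsum : ∀ v : ι → ℝ,
          ∑ i ∈ A, v i * Ssym (A.erase i) k v / Ssym A k v
          = (k+1 : ℝ) * Ssym A (k+1) v / Ssym A k v := by
        intro v
        rw [← Finset.sum_div, ← Ssym_deriv_identity]
      have hineq : (k+1:ℝ) * Ssym A (k+1) z / Ssym A k z
            + (k+1:ℝ) * Ssym A (k+1) w / Ssym A k w
          ≤ (k+1:ℝ) * Ssym A (k+1) (fun i => z i + w i) / Ssym A k (fun i => z i + w i) := by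
        rw [← hsum z, ← hsum w, ← hsum (fun i => z i + w i)]
        rw [← Finset.sum_add_distrib]
        exact Finset.sum_le_sum hper
      have hk1R : (0:ℝ) < (k+1:ℝ) := by positivity
      have hquot : Ssym A (k+1) z / Ssym A k z + Ssym A (k+1) w / Ssym A k w
          ≤ Ssym A (k+1) (fun i => z i + w i) / Ssym A k (fun i => z i + w i) := by
        rw [mul_div_assoc, mul_div_assoc, mul_div_assoc, ← mul_add] at hineq
        exact le_of_mul_le_mul_left hineq hk1R
      constructor
      · intro j h1 h2
        rcases Nat.lt_or_ge j (k+1) with hj | hj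
        · exact hGk j h1 (by omega)
        · have hjeq : j = k+1 := by omega
          subst hjeq
          have hRz : 0 < Ssym A (k+1) z / Ssym A k z :=
            div_pos (hz (k+1) (by omega) le_rfl) hSkz
          have hRw : 0 < Ssym A (k+1) w / Ssym A k w :=
            div_pos (hw (k+1) (by omega) le_rfl) hSkw
          have hR : 0 < Ssym A (k+1) (fun i => z i + w i) / Ssym A k (fun i => z i + w i) := by
            linarith
          have := mul_pos hR hSkzw
          rwa [div_mul_cancel₀ _ (ne_of_gt hSkzw)] at this
      · exact hquot
lemma concaveOn_congr_set {s : Set (Fin n → ℝ)} {f g : (Fin n → ℝ) → ℝ}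
    (h : ConcaveOn ℝ s f) (hfg : ∀ x ∈ s, f x = g x) : ConcaveOn ℝ s g := by
  refine ⟨h.1, fun x hx y hy a b ha hb hab => ?_⟩
  rw [← hfg _ (h.1 hx hy ha hb hab), ← hfg x hx, ← hfg y hy]
  exact h.2 hx hy ha hb hab

lemma quot_smul {n k : ℕ} (hk1 : 1 ≤ k) (c : ℝ) (hc : 0 < c) (v : Fin n → ℝ) :
    Ssym (univ : Finset (Fin n)) k (fun i => c * v i) / Ssym univ (k-1) (fun i => c * v i)
      = c * (Ssym univ k v / Ssym univ (k-1) v) := by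
  rw [Ssym_smul, Ssym_smul]
  have hkk : c ^ k = c * c^(k-1) := by
    rw [← pow_succ', show k-1+1 = k from by omega]
  rw [hkk, mul_assoc, mul_div_assoc]
  congr 1
  rw [mul_div_mul_left _ _ (pow_ne_zero _ (ne_of_gt hc))]

/-- concavity of the quotient `S_k/S_{k-1}` on the cone. -/
lemma concave_core (n k : ℕ) (hk1 : 1 ≤ k) (hkn : k ≤ n) :
    ConcaveOn ℝ {z : Fin n → ℝ | GammaS (univ : Finset (Fin n)) k z}
      (fun z => Ssym univ k z / Ssym univ (k-1) z) := by
  have hcarduniv : (univ : Finset (Fin n)).card = n := by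
    rw [Finset.card_univ, Fintype.card_fin]
  have hsmulmem : ∀ (c : ℝ), 0 < c → ∀ v : Fin n → ℝ, GammaS (univ : Finset (Fin n)) k v →
      GammaS (univ : Finset (Fin n)) k (fun i => c * v i) := by
    intro c hc v hv j h1 h2
    rw [Ssym_smul]
    exact mul_pos (pow_pos hc j) (hv j h1 h2)
  constructor
  · -- convexity of the cone
    intro x hx y hy a b ha hb hab
    rcases eq_or_lt_of_le ha with ha0 | ha0
    · have hb1 : b = 1 := by linarith
      have : a • x + b • y = y := by
        funext i
        simp [← ha0, hb1]
      rw [Set.mem_setOf_eq, this]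
      exact hy
    rcases eq_or_lt_of_le hb with hb0 | hb0
    · have ha1 : a = 1 := by linarith
      have : a • x + b • y = x := by
        funext i
        simp [← hb0, ha1]
      rw [Set.mem_setOf_eq, this]
      exact hx
    have hfun : a • x + b • y = fun i => (a * x i) + (b * y i) := by
      funext i
      simp [Pi.smul_apply, smul_eq_mul]
    rw [Set.mem_setOf_eq, hfun]
    exact (main_superadd k hk1 univ (fun i => a * x i) (fun i => b * y i)
      (by rw [hcarduniv]; exact hkn) (hsmulmem a ha0 x hx) (hsmulmem b hb0 y hy)).1
  · -- concavity inequality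
    intro x hx y hy a b ha hb hab
    rw [Set.mem_setOf_eq] at hx hy
    rcases eq_or_lt_of_le ha with ha0 | ha0
    · have hb1 : b = 1 := by linarith
      have hxy : a • x + b • y = y := by
        funext i
        simp [← ha0, hb1]
      rw [hxy, ← ha0, hb1]
      simp
    rcases eq_or_lt_of_le hb with hb0 | hb0
    · have ha1 : a = 1 := by linarith
      have hxy : a • x + b • y = x := by
        funext i
        simp [← hb0, ha1]
      rw [hxy, ← hb0, ha1]
      simp
    have hfun : a • x + b • y = fun i => (a * x i) + (b * y i) := by
      funext i
      simp [Pi.smul_apply, smul_eq_mul]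
    rw [hfun]
    have hmain := (main_superadd k hk1 univ (fun i => a * x i) (fun i => b * y i)
      (by rw [hcarduniv]; exact hkn) (hsmulmem a ha0 x hx) (hsmulmem b hb0 y hy)).2
    rw [quot_smul hk1 a ha0 x, quot_smul hk1 b hb0 y] at hmain
    simpa [smul_eq_mul] using hmain
lemma Esym_eq (n k : ℕ) (κ : Fin n → ℝ) :
    Esym n k κ = ((n.choose k : ℝ))⁻¹ * Ssym (univ : Finset (Fin n)) k κ := rfl

lemma choose_inv_pos {n j : ℕ} (h : j ≤ n) : (0:ℝ) < ((n.choose j : ℝ))⁻¹ := by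
  have h' : (0:ℝ) < (n.choose j : ℝ) := by exact_mod_cast Nat.choose_pos h
  positivity

lemma gammaPlus_eq (n k : ℕ) (hkn : k ≤ n) :
    GammaPlus n k = {z : Fin n → ℝ | GammaS (univ : Finset (Fin n)) k z} := by
  ext z
  simp only [GammaPlus, Set.mem_setOf_eq]
  constructor
  · intro h j h1 h2
    have hc := choose_inv_pos (h2.trans hkn)
    have hh := h j h1 h2
    rw [Esym_eq] at hh
    by_contra hS
    push_neg at hS
    nlinarith
  · intro h j h1 h2
    rw [Esym_eq]
    exact mul_pos (choose_inv_pos (h2.trans hkn)) (h j h1 h2)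

theorem statement7_part1 (n k : ℕ) (hk1 : 1 ≤ k) (hkn : k ≤ n) :
    ConcaveOn ℝ (GammaPlus n k) (Fquot n k) := by
  have hC : (0:ℝ) ≤ ((n.choose k : ℝ))⁻¹ / ((n.choose (k-1) : ℝ))⁻¹ := by positivity
  have hcon := (concave_core n k hk1 hkn).smul hC
  rw [gammaPlus_eq n k hkn]
  refine concaveOn_congr_set hcon ?_
  intro z _
  rw [smul_eq_mul, Fquot, Esym_eq, Esym_eq, mul_div_mul_comm]

theorem statement7_part2 (n k : ℕ) (hk1 : 1 ≤ k) (hkn : k ≤ n) :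
    ConcaveOn ℝ {κ : Fin n → ℝ | (∀ i, 0 < κ i) ∧ (fun i => (κ i)⁻¹) ∈ GammaPlus n k}
      (fun κ => (Fquot n k fun i => (κ i)⁻¹)⁻¹) := by
  have hn1 : 1 ≤ n := hk1.trans hkn
  have hcarduniv : (univ : Finset (Fin n)).card = n := by
    rw [Finset.card_univ, Fintype.card_fin]
  have hset : {κ : Fin n → ℝ | (∀ i, 0 < κ i) ∧ (fun i => (κ i)⁻¹) ∈ GammaPlus n k}
      = {κ : Fin n → ℝ | ∀ i, 0 < κ i} := by
    ext κ
    simp only [Set.mem_setOf_eq, and_iff_left_iff_imp]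
    intro hκ j h1 h2
    rw [Esym_eq]
    refine mul_pos (choose_inv_pos (h2.trans hkn)) (Ssym_pos ?_ ?_)
    · rw [hcarduniv]; exact h2.trans hkn
    · intro i _
      exact inv_pos.2 (hκ i)
  rw [hset]
  have hk'1 : 1 ≤ n - k + 1 := by omega
  have hk'n : n - k + 1 ≤ n := by omega
  have horth_subset : {κ : Fin n → ℝ | ∀ i, 0 < κ i}
      ⊆ {z : Fin n → ℝ | GammaS (univ : Finset (Fin n)) (n - k + 1) z} := by
    intro κ hκ j h1 h2
    exact Ssym_pos (by rw [hcarduniv]; omega) (fun i _ => hκ i)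
  have horth_convex : Convex ℝ {κ : Fin n → ℝ | ∀ i, 0 < κ i} := by
    have h : {κ : Fin n → ℝ | ∀ i, 0 < κ i} = Set.pi Set.univ (fun _ => Set.Ioi (0:ℝ)) := by
      ext κ
      simp [Set.mem_pi]
    rw [h]
    exact convex_pi (fun i _ => convex_Ioi 0)
  have hC' : (0:ℝ) ≤ ((n.choose (k-1) : ℝ))⁻¹ / ((n.choose k : ℝ))⁻¹ := by positivity
  have hcon := ((concave_core n (n - k + 1) hk'1 hk'n).subset horth_subset horth_convex).smul hC'
  refine concaveOn_congr_set hcon ?_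
  intro κ hκ
  rw [Set.mem_setOf_eq] at hκ
  have hκne : ∀ i ∈ (univ : Finset (Fin n)), κ i ≠ 0 := fun i _ => ne_of_gt (hκ i)
  have hP : (0:ℝ) < ∏ i ∈ (univ : Finset (Fin n)), κ i := Finset.prod_pos (fun i _ => hκ i)
  have hPinv : ((∏ i ∈ (univ : Finset (Fin n)), κ i)⁻¹) ≠ 0 := inv_ne_zero (ne_of_gt hP)
  have hczw1 := Ssym_compl (A := (univ : Finset (Fin n))) (k := k)
    (by rw [hcarduniv]; exact hkn) hκne
  have hczw2 := Ssym_compl (A := (univ : Finset (Fin n))) (k := k-1)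
    (by rw [hcarduniv]; omega) hκne
  rw [hcarduniv] at hczw1 hczw2
  have hidx1 : n - (k-1) = n - k + 1 := by omega
  have hidx2 : n - k = n - k + 1 - 1 := by omega
  rw [hidx2] at hczw1
  rw [hidx1] at hczw2
  rw [smul_eq_mul, Fquot, Esym_eq, Esym_eq, hczw1, hczw2, inv_div, mul_div_mul_comm,
    mul_div_mul_left _ _ hPinv]

/-- `F = E_k/E_{k-1}` is concave on `Γ_k^+`, and inverse concave:
`F_*(κ) = F(κ₁⁻¹,…,κₙ⁻¹)⁻¹` is concave on `{κ : ∀ i, κ i > 0, κ⁻¹ ∈ Γ_k^+}`. -/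
theorem statement7 (n k : ℕ) (hk1 : 1 ≤ k) (hkn : k ≤ n) :
    ConcaveOn ℝ (GammaPlus n k) (Fquot n k) ∧
      ConcaveOn ℝ {κ : Fin n → ℝ | (∀ i, 0 < κ i) ∧ (fun i => (κ i)⁻¹) ∈ GammaPlus n k}
        (fun κ => (Fquot n k fun i => (κ i)⁻¹)⁻¹) :=
  ⟨statement7_part1 n k hk1 hkn, statement7_part2 n k hk1 hkn⟩
end

section
/- If κ ∈ Γ_k^+ with all κ_i ≥ h^{-1} > 0 (static convexity), then E_{k-1}(κ) − h·E_k(κ) ≤ 0. -/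
/-- if `κ ∈ Γ_k^+` and all `κ_i ≥ h⁻¹ > 0` (static convexity),
then `E_{k-1}(κ) − h E_k(κ) ≤ 0`. -/
theorem statement14 (n k : ℕ) (hk1 : 1 ≤ k) (hkn : k ≤ n) (h : ℝ) (hh : 0 < h)
    (κ : Fin n → ℝ) (hκ : κ ∈ GammaPlus n k) (hstat : ∀ i, h⁻¹ ≤ κ i) :
    Esym n (k - 1) κ - h * Esym n k κ ≤ 0 := by
  have hκpos : ∀ i, 0 < κ i := fun i => lt_of_lt_of_le (inv_pos.mpr hh) (hstat i)
  set m := k - 1 with hm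
  have hkm : k = m + 1 := (Nat.succ_pred_eq_of_pos hk1).symm
  have hmn : m < n := lt_of_lt_of_le (by omega) hkn
  set Sm := ∑ s ∈ Finset.univ.powersetCard m, (∏ i ∈ s, κ i : ℝ) with hSm
  set Sk := ∑ s ∈ Finset.univ.powersetCard k, (∏ i ∈ s, κ i : ℝ) with hSk
  -- double counting
  have swap : ∑ s ∈ Finset.univ.powersetCard m, ∑ j ∈ (Finset.univ \ s),
        (∏ i ∈ insert j s, κ i : ℝ)
      = ∑ t ∈ Finset.univ.powersetCard k, ∑ j ∈ t, ∏ i ∈ t, κ i := by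
    rw [Finset.sum_sigma', Finset.sum_sigma']
    refine Finset.sum_nbij' (fun p => ⟨insert p.2 p.1, p.2⟩)
      (fun p => ⟨p.1.erase p.2, p.2⟩) ?_ ?_ ?_ ?_ ?_
    · rintro ⟨s, j⟩ hp
      simp only [Finset.mem_sigma, Finset.mem_powersetCard, Finset.mem_sdiff,
        Finset.mem_univ, true_and] at hp ⊢
      refine ⟨⟨Finset.subset_univ _, ?_⟩, Finset.mem_insert_self _ _⟩
      rw [Finset.card_insert_of_notMem hp.2, hp.1.2, hkm]
    · rintro ⟨t, j⟩ hp
      simp only [Finset.mem_sigma, Finset.mem_powersetCard, Finset.mem_sdiff,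
        Finset.mem_univ, true_and] at hp ⊢
      refine ⟨⟨Finset.subset_univ _, ?_⟩, Finset.notMem_erase _ _⟩
      rw [Finset.card_erase_of_mem hp.2, hp.1.2, hkm]
      omega
    · rintro ⟨s, j⟩ hp
      simp only [Finset.mem_sigma, Finset.mem_powersetCard, Finset.mem_sdiff,
        Finset.mem_univ, true_and] at hp
      simp [Finset.erase_insert hp.2]
    · rintro ⟨t, j⟩ hp
      simp only [Finset.mem_sigma, Finset.mem_powersetCard, Finset.mem_sdiff,
        Finset.mem_univ, true_and] at hp
      simp [Finset.insert_erase hp.2]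
    · rintro ⟨s, j⟩ hp
      rfl
  have key : ((n - m : ℕ) : ℝ) * Sm ≤ h * ((k : ℝ) * Sk) := by
    have lhs : ((n - m : ℕ) : ℝ) * Sm
        = ∑ s ∈ Finset.univ.powersetCard m, ∑ j ∈ (Finset.univ \ s), ∏ i ∈ s, κ i := by
      rw [hSm, Finset.mul_sum]
      refine Finset.sum_congr rfl fun s hs => ?_
      rw [Finset.sum_const, nsmul_eq_mul]
      congr 2
      rw [Finset.card_sdiff_of_subset (Finset.subset_univ s), Finset.card_univ, Fintype.card_fin,
        (Finset.mem_powersetCard.mp hs).2]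
    have rhs : h * ((k : ℝ) * Sk)
        = h * ∑ t ∈ Finset.univ.powersetCard k, ∑ j ∈ t, ∏ i ∈ t, κ i := by
      rw [hSk]
      congr 1
      rw [Finset.mul_sum]
      refine Finset.sum_congr rfl fun t ht => ?_
      rw [Finset.sum_const, nsmul_eq_mul, (Finset.mem_powersetCard.mp ht).2]
    rw [lhs, rhs, ← swap, Finset.mul_sum]
    refine Finset.sum_le_sum fun s hs => ?_
    rw [Finset.mul_sum]
    refine Finset.sum_le_sum fun j hj => ?_
    have hjs : j ∉ s := (Finset.mem_sdiff.mp hj).2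
    rw [Finset.prod_insert hjs, ← mul_assoc]
    have hprod : (0:ℝ) ≤ ∏ i ∈ s, κ i := Finset.prod_nonneg fun i _ => (hκpos i).le
    have : (1:ℝ) ≤ h * κ j := by
      rw [← mul_inv_cancel₀ (ne_of_gt hh)]
      exact mul_le_mul_of_nonneg_left (hstat j) hh.le
    nlinarith
  -- combinatorial identity
  have hchoose : (n.choose k : ℝ) * (k : ℝ) = (n.choose m : ℝ) * ((n - m : ℕ) : ℝ) := by
    rw [hkm]
    exact_mod_cast Nat.choose_succ_right_eq n m
  have hCm : (0:ℝ) < (n.choose m : ℝ) := by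
    exact_mod_cast Nat.choose_pos hmn.le
  have hCk : (0:ℝ) < (n.choose k : ℝ) := by exact_mod_cast Nat.choose_pos hkn
  have hd : (0:ℝ) < ((n - m : ℕ) : ℝ) := by
    have : 0 < n - m := by omega
    exact_mod_cast this
  rw [sub_nonpos, Esym, Esym, inv_mul_eq_div, inv_mul_eq_div, ← hSm, ← hSk,
    mul_div_assoc', div_le_div_iff₀ hCm hCk]
  have h2 : ((n - m : ℕ) : ℝ) * (Sm * (n.choose k : ℝ))
      ≤ ((n - m : ℕ) : ℝ) * (h * Sk * (n.choose m : ℝ)) := by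
    calc ((n - m : ℕ) : ℝ) * (Sm * (n.choose k : ℝ))
        = (n.choose k : ℝ) * (((n - m : ℕ) : ℝ) * Sm) := by ring
      _ ≤ (n.choose k : ℝ) * (h * ((k:ℝ) * Sk)) := mul_le_mul_of_nonneg_left key hCk.le
      _ = h * Sk * ((n.choose k : ℝ) * (k:ℝ)) := by ring
      _ = h * Sk * ((n.choose m : ℝ) * ((n - m : ℕ) : ℝ)) := by rw [hchoose]
      _ = ((n - m : ℕ) : ℝ) * (h * Sk * (n.choose m : ℝ)) := by ring
  exact le_of_mul_le_mul_left h2 hd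
end

section
/- Monotonicity functional identity: along the flow ∂ₜr = −√(1+r^{-2}|∇r|²)·Φ with Φ = (n/(n−1))·(∂f/∂r)·√(1+r^{-2}|∇r|²) + fH, the quantity ∫_{M_t} f^{n/(n−1)} dμ_t satisfies d/dt ∫_{M_t} f^{n/(n−1)} dμ_t = −∫_{M_t} f^{1/(n−1)} Φ² dμ_t ≤ 0. -/
open MeasureTheory

/-- monotonicity of `∫ f^{n/(n-1)} dμ_t` along the locally constrained
mean curvature flow `∂ₜ r = −√(1+r⁻²|∇r|²) Φ`, with
`Φ = (n/(n−1)) f'(r) √(1+r⁻²|∇r|²) + f(r) H`, area element `J` evolving by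
`∂ₜ J = −Φ H J`: the derivative equals `−∫ f^{1/(n-1)} Φ² dμ_t ≤ 0`. -/
theorem statement15 {X : Type*} [MeasurableSpace X] (μ : Measure X)
    (n : ℕ) (hn : 2 ≤ n)
    (r rt J Jt H g2 Φ : ℝ → X → ℝ) (f f' : ℝ → ℝ)
    (hfpos : ∀ s : ℝ, 0 < f s)
    (hf' : ∀ s : ℝ, HasDerivAt f (f' s) s)
    (hJ : ∀ t x, 0 ≤ J t x)
    (hg2 : ∀ t x, 0 ≤ g2 t x)
    (hΦ : ∀ t x, Φ t x
      = ((n : ℝ) / ((n : ℝ) - 1)) * f' (r t x) * Real.sqrt (1 + g2 t x)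
        + f (r t x) * H t x)
    (hrt : ∀ t x, rt t x = -(Real.sqrt (1 + g2 t x) * Φ t x))
    (hJt : ∀ t x, Jt t x = -(Φ t x * H t x * J t x))
    (t : ℝ)
    (hD : HasDerivAt (fun s => ∫ x, f (r s x) ^ ((n : ℝ) / ((n : ℝ) - 1)) * J s x ∂μ)
      (∫ x, (((n : ℝ) / ((n : ℝ) - 1)) * f (r t x) ^ ((1 : ℝ) / ((n : ℝ) - 1))
          * f' (r t x) * rt t x * J t x
        + f (r t x) ^ ((n : ℝ) / ((n : ℝ) - 1)) * Jt t x) ∂μ) t)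
    (hInt : Integrable
      (fun x => f (r t x) ^ ((1 : ℝ) / ((n : ℝ) - 1)) * Φ t x ^ 2 * J t x) μ) :
    HasDerivAt (fun s => ∫ x, f (r s x) ^ ((n : ℝ) / ((n : ℝ) - 1)) * J s x ∂μ)
        (-∫ x, f (r t x) ^ ((1 : ℝ) / ((n : ℝ) - 1)) * Φ t x ^ 2 * J t x ∂μ) t ∧
      (-∫ x, f (r t x) ^ ((1 : ℝ) / ((n : ℝ) - 1)) * Φ t x ^ 2 * J t x ∂μ) ≤ 0 := by
  have key : ∀ x,
      (((n : ℝ) / ((n : ℝ) - 1)) * f (r t x) ^ ((1 : ℝ) / ((n : ℝ) - 1))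
          * f' (r t x) * rt t x * J t x
        + f (r t x) ^ ((n : ℝ) / ((n : ℝ) - 1)) * Jt t x)
      = -(f (r t x) ^ ((1 : ℝ) / ((n : ℝ) - 1)) * Φ t x ^ 2 * J t x) := by
    intro x
    have hne : ((n : ℝ) - 1) ≠ 0 := by
      have : (2 : ℝ) ≤ (n : ℝ) := by exact_mod_cast hn
      linarith
    have hpow : f (r t x) ^ ((n : ℝ) / ((n : ℝ) - 1))
        = f (r t x) ^ ((1 : ℝ) / ((n : ℝ) - 1)) * f (r t x) := by
      have : (n : ℝ) / ((n : ℝ) - 1) = (1 : ℝ) / ((n : ℝ) - 1) + 1 := by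
        field_simp
        ring
      rw [this, Real.rpow_add (hfpos _), Real.rpow_one]
    rw [hpow, hrt, hJt, hΦ]
    ring
  rw [integral_congr_ae (Filter.Eventually.of_forall key), integral_neg] at hD
  refine ⟨hD, ?_⟩
  have : 0 ≤ ∫ x, f (r t x) ^ ((1 : ℝ) / ((n : ℝ) - 1)) * Φ t x ^ 2 * J t x ∂μ := by
    refine integral_nonneg fun x => ?_
    exact mul_nonneg (mul_nonneg (Real.rpow_nonneg (hfpos (r t x)).le _) (sq_nonneg _)) (hJ t x)
  linarith
end

section
/- Quermassintegral preservation: along the flow ∂ₜX = (1 − h·E_k/E_{k-1})ν of smooth closed strictly convex hypersurfaces in ℝ^{n+1}, the (k−1)-th quermassintegral V_{k-1}(Ω_t) is constant in time; this follows from the Minkowski identity ∫_{M_t} E_{k-1} dμ = ∫_{M_t} h·E_k dμ. -/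
open MeasureTheory

/-- quermassintegral preservation along the flow
`∂ₜX = (1 − h E_k/E_{k-1}) ν`. Given that the `(k−1)`-th quermassintegral `V` of the
enclosed domains satisfies the first-variation formula
`V'(t) = (n+2−k) ∫ E_{k-1} (1 − h E_k/E_{k-1}) dμ_t` (area element `J`), and the
Minkowski identity `∫ E_{k-1} dμ_t = ∫ h E_k dμ_t`, the quantity `V` is constant. -/
theorem statement18 {X : Type*} [MeasurableSpace X] (μ : Measure X)
    (n k : ℕ) (hn : 2 ≤ n) (hk1 : 1 ≤ k) (hkn : k ≤ n)
    (Ekm Ek h J : ℝ → X → ℝ) (V : ℝ → ℝ)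
    (hpos : ∀ t x, 0 < Ekm t x)
    (hJ : ∀ t x, 0 ≤ J t x)
    (hV : ∀ t : ℝ, HasDerivAt V
      (((n : ℝ) + 2 - (k : ℝ)) *
        ∫ x, Ekm t x * (1 - h t x * Ek t x / Ekm t x) * J t x ∂μ) t)
    (hInt1 : ∀ t : ℝ, Integrable (fun x => Ekm t x * J t x) μ)
    (hInt2 : ∀ t : ℝ, Integrable (fun x => h t x * Ek t x * J t x) μ)
    (hMink : ∀ t : ℝ, ∫ x, Ekm t x * J t x ∂μ = ∫ x, h t x * Ek t x * J t x ∂μ) :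
    ∀ s t : ℝ, V s = V t := by
  have hzero : ∀ t : ℝ, HasDerivAt V 0 t := by
    intro t
    have key : (∀ x, Ekm t x * (1 - h t x * Ek t x / Ekm t x) * J t x
        = Ekm t x * J t x - h t x * Ek t x * J t x) := by
      intro x
      field_simp [(hpos t x).ne']
    have hEq : (((n : ℝ) + 2 - (k : ℝ)) *
        ∫ x, Ekm t x * (1 - h t x * Ek t x / Ekm t x) * J t x ∂μ) = 0 := by
      have : (∫ x, Ekm t x * (1 - h t x * Ek t x / Ekm t x) * J t x ∂μ)
          = ∫ x, (Ekm t x * J t x - h t x * Ek t x * J t x) ∂μ := by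
        exact integral_congr_ae (Filter.Eventually.of_forall key)
      rw [this, integral_sub (hInt1 t) (hInt2 t), hMink t, sub_self, mul_zero]
    simpa [hEq] using hV t
  have hconst : ∀ s t : ℝ, V s = V t := by
    intro s t
    have hd : ∀ u, deriv V u = 0 := fun u => (hzero u).deriv
    have := is_const_of_deriv_eq_zero (fun u => (hzero u).differentiableAt) hd s t
    exact this
  exact hconst
end
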